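/- arXiv:1906.00849 — 2 statements merged into one kernel-verified Lean document; each statement's English description precedes it below -/
import Mathlib

section
/- Assume CH (2^{ℵ₀} = ℵ₁) and assume: (a) there is a Suslin tree R such that a regular Aronszajn tree is special if and only if no derived tree of R club-embeds into it, and (b) there is a family of ℵ₁-many Suslin trees such that every Suslin tree is club-isomorphic to a member of the family (as holds in the Abraham–Shelah model). Then the class s𝒜 of regular special Aronszajn trees and the class 𝒮 of regular Suslin trees are both Δ¹₁ subsets of 2^{ω₁}. -/
noncomputable section

open Set

/-- The ordinal `ω₁`. -/
abbrev omega1Ord : Ordinal := (Cardinal.aleph 1).ord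

/-- `ω₁`, the first uncountable ordinal, as a type. -/
abbrev Omega1 : Type := omega1Ord.ToType

open Classical in
/-- The height of a node `b` in the tree given by the strict order `r`:
the order type of the set of `r`-predecessors of `b`. -/
noncomputable def treeHeight {α : Type} (r : α → α → Prop) (b : α) : Ordinal :=
  if h : IsWellOrder {a // r a b} (fun x y => r x.1 y.1) then
    @Ordinal.type {a // r a b} (fun x y => r x.1 y.1) h
  else 0

/-- The level `ξ` of the tree given by `r`: the set of nodes of height `ξ`. -/
def treeLevel {α : Type} (r : α → α → Prop) (ξ : Ordinal) : Set α :=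
  {b | treeHeight r b = ξ}

/-- `r` is a (strict) tree order: it is transitive and irreflexive, and the set of
predecessors of any node is well-ordered by `r`. -/
structure IsTreeOrder {α : Type} (r : α → α → Prop) : Prop where
  trans : ∀ a b c, r a b → r b c → r a c
  irrefl : ∀ a, ¬ r a a
  pred_trichot : ∀ a b c, r a c → r b c → (r a b ∨ a = b ∨ r b a)
  pred_wellOrdered : ∀ c, ∀ S : Set α, (∀ a ∈ S, r a c) → S.Nonempty →
    ∃ m ∈ S, ∀ a ∈ S, m = a ∨ r m a

/-- An `ℵ₁`-tree on `ω₁`: a tree order all of whose levels are countable,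
with the levels below `ω₁` nonempty and the levels from `ω₁` onwards empty. -/
structure IsAleph1Tree (r : Omega1 → Omega1 → Prop) : Prop where
  toIsTreeOrder : IsTreeOrder r
  level_countable : ∀ ξ : Ordinal, (treeLevel r ξ).Countable
  level_nonempty : ∀ ξ : Ordinal, ξ < omega1Ord → (treeLevel r ξ).Nonempty
  level_empty_of_ge : ∀ ξ : Ordinal, omega1Ord ≤ ξ → treeLevel r ξ = ∅

/-- `t` is an immediate successor of `s`. -/
def ImmSucc {α : Type} (r : α → α → Prop) (s t : α) : Prop :=
  r s t ∧ ¬ ∃ u, r s u ∧ r u t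

/-- A regular tree on `ω₁`: an `ℵ₁`-tree which is rooted, in which every node has
at least two immediate successors, and which is pruned. -/
structure IsRegularTree (r : Omega1 → Omega1 → Prop) : Prop where
  toIsAleph1Tree : IsAleph1Tree r
  rooted : ∃ rt, ∀ a, a = rt ∨ r rt a
  binBranching : ∀ s, ∃ t₁ t₂, t₁ ≠ t₂ ∧ ImmSucc r s t₁ ∧ ImmSucc r s t₂
  pruned : ∀ s, ∀ γ : Ordinal, treeHeight r s < γ → γ < omega1Ord →
    ∃ t, r s t ∧ treeHeight r t = γ

/-- `c` is a chain with respect to `r`. -/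
def IsChainIn {α : Type} (r : α → α → Prop) (c : Set α) : Prop :=
  ∀ a ∈ c, ∀ b ∈ c, a = b ∨ r a b ∨ r b a

/-- `c` is an antichain with respect to `r`. -/
def IsAntichainIn {α : Type} (r : α → α → Prop) (c : Set α) : Prop :=
  ∀ a ∈ c, ∀ b ∈ c, a ≠ b → ¬ r a b ∧ ¬ r b a

/-- A branch: a maximal chain. -/
def IsBranchIn {α : Type} (r : α → α → Prop) (c : Set α) : Prop :=
  IsChainIn r c ∧ ∀ c', IsChainIn r c' → c ⊆ c' → c = c'

/-- An Aronszajn tree: an `ℵ₁`-tree with no uncountable chain. -/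
def IsAronszajnTree (r : Omega1 → Omega1 → Prop) : Prop :=
  IsAleph1Tree r ∧ ∀ c : Set Omega1, IsChainIn r c → c.Countable

/-- A Suslin tree: an Aronszajn tree with no uncountable antichain. -/
def IsSuslinTree (r : Omega1 → Omega1 → Prop) : Prop :=
  IsAronszajnTree r ∧ ∀ c : Set Omega1, IsAntichainIn r c → c.Countable

/-- A special Aronszajn tree: an Aronszajn tree which is the union of
countably many antichains. -/
def IsSpecialAronszajnTree (r : Omega1 → Omega1 → Prop) : Prop :=
  IsAronszajnTree r ∧
    ∃ A : ℕ → Set Omega1, (∀ n, IsAntichainIn r (A n)) ∧ (⋃ n, A n) = Set.univ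

/-- A Kurepa tree: an `ℵ₁`-tree with at least `ℵ₂` uncountable branches. -/
def IsKurepaTree (r : Omega1 → Omega1 → Prop) : Prop :=
  IsAleph1Tree r ∧
    Cardinal.aleph 2 ≤ Cardinal.mk {c : Set Omega1 // IsBranchIn r c ∧ ¬ c.Countable}

/-- A fixed bijection `ω₁ × ω₁ ≃ ω₁`. -/
def pairEquiv : Omega1 × Omega1 ≃ Omega1 := Classical.choice <| by
  rw [← Cardinal.eq]
  have h1 : Cardinal.mk Omega1 = Cardinal.aleph 1 := by
    rw [Cardinal.mk_toType, Cardinal.card_ord]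
  simp only [Cardinal.mk_prod, Cardinal.lift_id, h1]
  exact Cardinal.mul_eq_self (Cardinal.aleph0_le_aleph 1)

/-- The tree relation on `ω₁` coded by `x : 2^{ω₁}` via the fixed pairing bijection. -/
def codedRel (x : Omega1 → Bool) : Omega1 → Omega1 → Prop :=
  fun a b => x (pairEquiv (a, b)) = true

/-- `x` is a code of a regular tree on `ω₁`. -/
def IsRegularTreeCode (x : Omega1 → Bool) : Prop := IsRegularTree (codedRel x)

/-! ### The generalized Baire space topology -/

/-- The basic open set `[p]` determined by a partial function `p`. -/
def gbsBasic {I X : Type} (p : I → Option X) : Set (I → X) :=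
  {x | ∀ i : I, ∀ y : X, p i = some y → x i = y}

/-- `p` is a countable partial function, i.e. it has countable support. -/
def CtblSupp {I X : Type} (p : I → Option X) : Prop :=
  {i | p i ≠ none}.Countable

/-- The topology on `X^I` generated by the sets `[p]` for countable partial
functions `p`. -/
def gbsTop (I X : Type) : TopologicalSpace (I → X) :=
  TopologicalSpace.generateFrom
    {s | ∃ p : I → Option X, CtblSupp p ∧ s = gbsBasic p}

/-- The `ω₁`-Borel subsets of a topological space: the smallest family containing
the open sets and closed under complements and unions of `ℵ₁`-many sets. -/
inductive IsOmega1Borel {β : Type} (t : TopologicalSpace β) : Set β → Prop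
  | basic (s : Set β) : t.IsOpen s → IsOmega1Borel t s
  | compl (s : Set β) : IsOmega1Borel t s → IsOmega1Borel t sᶜ
  | iUnion (f : Omega1 → Set β) : (∀ i, IsOmega1Borel t (f i)) →
      IsOmega1Borel t (⋃ i, f i)

/-- `A` is `Π¹₁`: there is an open `B ⊆ β × ω₁^{ω₁}` with
`x ∈ A ↔ ∀ g, (x, g) ∈ B`. -/
def IsPi11 {β : Type} (t : TopologicalSpace β) (A : Set β) : Prop :=
  ∃ B : Set (β × (Omega1 → Omega1)),
    (@instTopologicalSpaceProd β (Omega1 → Omega1) t (gbsTop Omega1 Omega1)).IsOpen B ∧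
    ∀ x, x ∈ A ↔ ∀ g : Omega1 → Omega1, (x, g) ∈ B

/-- `A` is `Σ¹₁`: its complement is `Π¹₁`. -/
def IsSigma11 {β : Type} (t : TopologicalSpace β) (A : Set β) : Prop :=
  IsPi11 t Aᶜ

/-- `A` is `Δ¹₁`: both `Σ¹₁` and `Π¹₁`. -/
def IsDelta11 {β : Type} (t : TopologicalSpace β) (A : Set β) : Prop :=
  IsPi11 t A ∧ IsSigma11 t A

/-! ### Meagerness and the Baire property -/

/-- `s` is nowhere dense with respect to the topology `t`. -/
def IsNwdIn {β : Type} (t : TopologicalSpace β) (s : Set β) : Prop :=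
  @interior β t (@closure β t s) = ∅

/-- `s` is (`ω₁`-)meager: it is covered by `ℵ₁`-many nowhere dense sets. -/
def IsOmega1Meager {β : Type} (t : TopologicalSpace β) (s : Set β) : Prop :=
  ∃ f : Omega1 → Set β, (∀ i, IsNwdIn t (f i)) ∧ s ⊆ ⋃ i, f i

/-- `s` has the Baire property: its symmetric difference with some open set is meager. -/
def HasBaireProperty {β : Type} (t : TopologicalSpace β) (s : Set β) : Prop :=
  ∃ o : Set β, t.IsOpen o ∧ IsOmega1Meager t ((s \ o) ∪ (o \ s))

/-! ### The space of regular trees -/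

/-- The space of (codes of) regular trees on `ω₁`. -/
abbrev RegTreeSpace : Type := {x : Omega1 → Bool // IsRegularTreeCode x}

/-- The subspace topology on the space of regular trees. -/
def regTreeTop : TopologicalSpace RegTreeSpace :=
  TopologicalSpace.induced (fun z => z.1) (gbsTop Omega1 Bool)

/-- The trace of the basic open set `[p]` on the space of regular trees. -/
def regTreeBasic (p : Omega1 → Option Bool) : Set RegTreeSpace :=
  {z | z.1 ∈ gbsBasic p}

/-- Two tree relations on `ω₁` are isomorphic. -/
def TreeIso (r r' : Omega1 → Omega1 → Prop) : Prop :=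
  ∃ e : Omega1 ≃ Omega1, ∀ a b, r a b ↔ r' (e a) (e b)

/-! ### Clubs, stationary sets and diamonds -/

/-- `C ⊆ ω₁` is club: it is unbounded and contains all of its limit points. -/
def IsClubIn (C : Set Omega1) : Prop :=
  (∀ a : Omega1, ∃ b ∈ C, a < b) ∧
  (∀ a : Omega1, (∃ b, b < a) → (∀ b, b < a → ∃ c ∈ C, b < c ∧ c < a) → a ∈ C)

/-- `X ⊆ ω₁` is stationary: it meets every club. -/
def IsStationaryOmega1 (X : Set Omega1) : Prop :=
  ∀ C : Set Omega1, IsClubIn C → (X ∩ C).Nonempty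

/-- The diamond-plus principle `◊⁺` on `ω₁`. -/
def DiamondPlus : Prop :=
  ∃ A : Omega1 → Set (Set Omega1),
    (∀ α, (A α).Countable) ∧
    ∀ X : Set Omega1, ∃ C : Set Omega1, IsClubIn C ∧
      ∀ α ∈ C, (C ∩ {b | b < α}) ∈ A α ∧ (X ∩ {b | b < α}) ∈ A α

/-! ### Completeness -/

/-- `A ⊆ 2^{ω₁}` is `Π¹₁`-complete. -/
def IsPi11Complete (A : Set (Omega1 → Bool)) : Prop :=
  IsPi11 (gbsTop Omega1 Bool) A ∧
  ∀ S : Set (Omega1 → Bool), IsPi11 (gbsTop Omega1 Bool) S →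
    ∃ π : (Omega1 → Bool) → Omega1 → Bool,
      @Continuous _ _ (gbsTop Omega1 Bool) (gbsTop Omega1 Bool) π ∧
      ∀ x, x ∈ S ↔ π x ∈ A

/-- `A ⊆ 2^{ω₁}` is `Σ¹₁`-complete. -/
def IsSigma11Complete (A : Set (Omega1 → Bool)) : Prop :=
  IsSigma11 (gbsTop Omega1 Bool) A ∧
  ∀ S : Set (Omega1 → Bool), IsSigma11 (gbsTop Omega1 Bool) S →
    ∃ π : (Omega1 → Bool) → Omega1 → Bool,
      @Continuous _ _ (gbsTop Omega1 Bool) (gbsTop Omega1 Bool) π ∧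
      ∀ x, x ∈ S ↔ π x ∈ A

/-- The set of codes of stationary subsets of `ω₁`, as a subset of `2^{ω₁}`. -/
def StatCodes : Set (Omega1 → Bool) := {x | IsStationaryOmega1 {a | x a = true}}


/-- The ordinal corresponding to an element of `ω₁` (the order type of its set of
predecessors). -/
def ordOf (a : Omega1) : Ordinal := treeHeight (fun x y : Omega1 => x < y) a

/-- The coordinatewise (level product) strict order on tuples of nodes. -/
def derivedLT (R : Omega1 → Omega1 → Prop) {n : ℕ} (f g : Fin n → Omega1) : Prop :=
  ∀ i, R (f i) (g i)

/-- The nodes of the derived tree of `R` determined by the tuple `s`: tuples of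
nodes of a common height, with `f i` equal to or above `s i`. -/
def derivedNodes (R : Omega1 → Omega1 → Prop) {n : ℕ} (s : Fin n → Omega1) :
    Set (Fin n → Omega1) :=
  {f | (∀ i, s i = f i ∨ R (s i) (f i)) ∧
    ∀ i j, treeHeight R (f i) = treeHeight R (f j)}

/-- `s` consists of distinct nodes from a common level of `R`. -/
def IsDerivedBase (R : Omega1 → Omega1 → Prop) {n : ℕ} (s : Fin n → Omega1) : Prop :=
  Function.Injective s ∧ ∀ i j, treeHeight R (s i) = treeHeight R (s j)

/-- The part of the derived tree of `R` at `s` consisting of nodes whose height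
lies in `C`. -/
def derivedRestrict (R : Omega1 → Omega1 → Prop) {n : ℕ} (s : Fin n → Omega1)
    (C : Set Omega1) : Set (Fin n → Omega1) :=
  {f ∈ derivedNodes R s | ∃ c ∈ C, ∀ i, treeHeight R (f i) = ordOf c}

/-- The derived tree of `R` at `s` club-embeds into the tree `r` on `ω₁`. -/
def DerivedClubEmbeds (R : Omega1 → Omega1 → Prop) {n : ℕ} (s : Fin n → Omega1)
    (r : Omega1 → Omega1 → Prop) : Prop :=
  ∃ C : Set Omega1, IsClubIn C ∧ ∃ e : (Fin n → Omega1) → Omega1,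
    Set.InjOn e (derivedRestrict R s C) ∧
    ∀ f ∈ derivedRestrict R s C, ∀ g ∈ derivedRestrict R s C,
      derivedLT R f g → r (e f) (e g)

/-- The set of nodes of the tree `r` on `ω₁` whose height lies in `C`. -/
def treeRestrictNodes (r : Omega1 → Omega1 → Prop) (C : Set Omega1) : Set Omega1 :=
  {a | ∃ c ∈ C, treeHeight r a = ordOf c}

/-- The trees `r` and `r'` on `ω₁` are club-isomorphic. -/
def ClubIso (r r' : Omega1 → Omega1 → Prop) : Prop :=
  ∃ C : Set Omega1, IsClubIn C ∧ ∃ e : Omega1 → Omega1,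
    Set.BijOn e (treeRestrictNodes r C) (treeRestrictNodes r' C) ∧
    ∀ a ∈ treeRestrictNodes r C, ∀ b ∈ treeRestrictNodes r C,
      (r a b ↔ r' (e a) (e b))

namespace St13

open Classical
set_option linter.unusedVariables false

instance : IsWellOrder Omega1 (· < ·) := isWellOrder_lt


abbrev G : Type := Omega1 → Omega1
abbrev tG : TopologicalSpace G := gbsTop Omega1 Omega1

instance : Nonempty Omega1 :=
  Ordinal.toType_nonempty_iff_ne_zero.2
    (by rw [ne_eq, Cardinal.ord_eq_zero]; exact (Cardinal.aleph_pos 1).ne')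

instance : Infinite Omega1 := by
  rw [Cardinal.infinite_iff, Cardinal.mk_toType, Cardinal.card_ord]
  exact Cardinal.aleph0_le_aleph 1

/-- a fixed injection of `ℕ` into `Omega1`. -/
def natEmb : ℕ → Omega1 := fun n => (Infinite.natEmbedding Omega1) n

lemma natEmb_inj : Function.Injective natEmb := (Infinite.natEmbedding Omega1).injective

/-- tagged injections `Omega1 → Omega1` with pairwise disjoint ranges. -/
def mfn (t : Omega1) (a : Omega1) : Omega1 := pairEquiv (a, t)

lemma mfn_eq_iff {t a t' a'} : mfn t a = mfn t' a' ↔ a = a' ∧ t = t' := by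
  constructor
  · intro h
    have := pairEquiv.injective h
    exact ⟨congrArg Prod.fst this, congrArg Prod.snd this⟩
  · rintro ⟨rfl, rfl⟩; rfl

lemma mfn_inj (t : Omega1) : Function.Injective (mfn t) := fun a a' h => (mfn_eq_iff.1 h).1

/-- glue a family of functions into a single `g`. -/
def kglue (F : Omega1 → Omega1 → Omega1) : G := fun b =>
  F (pairEquiv.symm b).2 (pairEquiv.symm b).1

@[simp] lemma kglue_mfn (F : Omega1 → Omega1 → Omega1) (t a : Omega1) :
    kglue F (mfn t a) = F t a := by
  simp [kglue, mfn]

/-! ### basic topology lemmas -/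

lemma isOpen_gbsBasic {I Xv : Type} {p : I → Option Xv} (hp : CtblSupp p) :
    (gbsTop I Xv).IsOpen (gbsBasic p) :=
  TopologicalSpace.isOpen_generateFrom_of_mem ⟨p, hp, rfl⟩

lemma isOpen_coord {I Xv : Type} (i : I) (y : Xv) :
    (gbsTop I Xv).IsOpen {f | f i = y} := by
  have : {f : I → Xv | f i = y} = gbsBasic (fun j => if j = i then some y else none) := by
    ext f
    constructor
    · intro hf j z hz
      by_cases h : j = i
      · subst h; simp only [if_pos rfl] at hz; cases hz; exact hf
      · simp [h] at hz
    · intro hf; exact hf i y (by simp)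
  rw [this]
  refine isOpen_gbsBasic (Set.Countable.mono ?_ (Set.countable_singleton i))
  intro j hj
  by_cases h : j = i
  · exact h
  · simp [h] at hj

def pushPartial {I J Xv : Type} (σ : J → I) (p : J → Option Xv) : I → Option Xv :=
  fun i => if h : ∃ j, σ j = i then p h.choose else none

lemma continuous_precomp {I J Xv : Type} (σ : J → I) (hσ : Function.Injective σ) :
    @Continuous _ _ (gbsTop I Xv) (gbsTop J Xv) (fun f => f ∘ σ) := by
  letI := gbsTop I Xv
  rw [gbsTop, gbsTop, continuous_generateFrom_iff]
  rintro s ⟨p, hp, rfl⟩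
  have he : (fun f : I → Xv => f ∘ σ) ⁻¹' gbsBasic p = gbsBasic (pushPartial σ p) := by
    ext f
    constructor
    · intro hf i y hy
      rw [pushPartial] at hy
      split_ifs at hy with h
      · rw [← h.choose_spec]
        exact hf h.choose y hy
    · intro hf j y hy
      refine hf (σ j) y ?_
      rw [pushPartial]
      have h : ∃ j', σ j' = σ j := ⟨j, rfl⟩
      rw [dif_pos h]
      have : h.choose = j := hσ h.choose_spec
      rw [this]; exact hy
  rw [he]
  refine isOpen_gbsBasic ?_
  have : {i | pushPartial σ p i ≠ none} ⊆ σ '' {j | p j ≠ none} := by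
    intro i hi
    simp only [pushPartial, ne_eq, mem_setOf_eq] at hi
    split_ifs at hi with h
    · exact ⟨h.choose, hi, h.choose_spec⟩
    · simp at hi
  exact Set.Countable.mono this (Set.Countable.image hp σ)

/-! ### Pi11 machinery -/

section Machinery

variable {β : Type} {t : TopologicalSpace β}

/-- the product topology on `β × G`. -/
abbrev tP (t : TopologicalSpace β) : TopologicalSpace (β × G) :=
  @instTopologicalSpaceProd β G t tG

lemma pi_congr {A B : Set β} (h : A = B) (hA : IsPi11 t A) : IsPi11 t B := h ▸ hA

lemma pi_open {A : Set β} (hA : t.IsOpen A) : IsPi11 t A := by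
  refine ⟨A ×ˢ (univ : Set G), ?_, ?_⟩
  · exact @IsOpen.prod _ _ t tG _ _ hA (@isOpen_univ _ tG)
  · intro x
    constructor
    · intro hx g; exact ⟨hx, trivial⟩
    · intro h; exact (h (fun a => a)).1

lemma pi_empty : IsPi11 t (∅ : Set β) := pi_open (@isOpen_empty _ t)

lemma pi_univ : IsPi11 t (univ : Set β) := pi_open (@isOpen_univ _ t)

/-- the canonical "coordinate" open set in `β × G`. -/
lemma isOpen_sndCoord (a b : Omega1) : (tP t).IsOpen {z : β × G | z.2 a = b} := by
  letI := t; letI := tG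
  have : {z : β × G | z.2 a = b} = Prod.snd ⁻¹' {g : G | g a = b} := rfl
  rw [this]
  exact continuous_snd.isOpen_preimage _ (isOpen_coord a b)

lemma continuous_precompSnd (m : Omega1 → Omega1) (hm : Function.Injective m) :
    @Continuous _ _ (tP t) (tP t) (fun z : β × G => (z.1, z.2 ∘ m)) := by
  letI := t; letI := tG
  exact Continuous.prodMk continuous_fst ((continuous_precomp m hm).comp continuous_snd)

/-- two fixed distinct tags -/
private lemma tag_ne : natEmb 0 ≠ natEmb 1 := fun h => by simpa using natEmb_inj h

lemma pi_iInter {f : Omega1 → Set β} (h : ∀ i, IsPi11 t (f i)) :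
    IsPi11 t (⋂ i, f i) := by
  choose B hBopen hBsec using h
  set c₀ : Omega1 := mfn (natEmb 0) (natEmb 0) with hc₀
  refine ⟨⋃ α, ({z : β × G | z.2 c₀ = α} ∩
      ((fun z : β × G => (z.1, z.2 ∘ mfn (natEmb 1))) ⁻¹' B α)), ?_, ?_⟩
  · letI := t; letI := tG
    refine isOpen_iUnion (fun α => IsOpen.inter (isOpen_sndCoord c₀ α) ?_)
    exact (continuous_precompSnd (mfn (natEmb 1)) (mfn_inj _)).isOpen_preimage _ (hBopen α)
  · intro x
    constructor
    · intro hx k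
      refine mem_iUnion.2 ⟨k c₀, rfl, ?_⟩
      exact ((hBsec (k c₀) x).1 (mem_iInter.1 hx (k c₀))) (k ∘ mfn (natEmb 1))
    · intro hk
      refine mem_iInter.2 (fun i => (hBsec i x).2 (fun g => ?_))
      set k : G := kglue (fun tg a => if tg = natEmb 1 then g a else i) with hk'
      have h1 : k c₀ = i := by
        rw [hc₀, hk', kglue_mfn, if_neg tag_ne]
      have h2 : k ∘ mfn (natEmb 1) = g := by
        funext a; simp [hk']
      rcases mem_iUnion.1 (hk k) with ⟨α, hα, hB⟩
      have hα' : k c₀ = α := hα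
      have hαi : α = i := hα'.symm.trans h1
      subst hαi
      have hB' : (x, k ∘ mfn (natEmb 1)) ∈ B α := hB
      rwa [h2] at hB'

lemma pi_iUnion {f : Omega1 → Set β} (h : ∀ i, IsPi11 t (f i)) :
    IsPi11 t (⋃ i, f i) := by
  choose B hBopen hBsec using h
  refine ⟨⋃ α, ((fun z : β × G => (z.1, z.2 ∘ mfn α)) ⁻¹' B α), ?_, ?_⟩
  · letI := t; letI := tG
    exact isOpen_iUnion (fun α =>
      (continuous_precompSnd (mfn α) (mfn_inj _)).isOpen_preimage _ (hBopen α))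
  · intro x
    constructor
    · intro hx k
      rcases mem_iUnion.1 hx with ⟨α, hα⟩
      exact mem_iUnion.2 ⟨α, (hBsec α x).1 hα (k ∘ mfn α)⟩
    · intro hk
      by_contra hx
      have hnot : ∀ α, ∃ g, (x, g) ∉ B α := by
        intro α
        by_contra hg
        push_neg at hg
        exact hx (mem_iUnion.2 ⟨α, (hBsec α x).2 hg⟩)
      choose gg hgg using hnot
      rcases mem_iUnion.1 (hk (kglue (fun tg a => gg tg a))) with ⟨α, hB⟩
      have : (kglue (fun tg a => gg tg a)) ∘ mfn α = gg α := by funext a; simp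
      rw [mem_preimage, this] at hB
      exact hgg α hB

lemma pi_forall {D : Set (β × G)} (hD : IsPi11 (tP t) D) :
    IsPi11 t {x | ∀ g : G, (x, g) ∈ D} := by
  rcases hD with ⟨B, hBopen, hBsec⟩
  refine ⟨(fun z : β × G => ((z.1, z.2 ∘ mfn (natEmb 0)), z.2 ∘ mfn (natEmb 1))) ⁻¹' B, ?_, ?_⟩
  · letI := t; letI := tG
    refine Continuous.isOpen_preimage ?_ _ hBopen
    refine Continuous.prodMk (Continuous.prodMk continuous_fst ?_) ?_
    · exact (continuous_precomp _ (mfn_inj _)).comp continuous_snd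
    · exact (continuous_precomp _ (mfn_inj _)).comp continuous_snd
  · intro x
    constructor
    · intro hx k
      exact (hBsec (x, k ∘ mfn (natEmb 0))).1 (hx _) (k ∘ mfn (natEmb 1))
    · intro hk g
      refine (hBsec (x, g)).2 (fun h => ?_)
      set k : G := kglue (fun tg a => if tg = natEmb 0 then g a else h a) with hk'
      have h1 : k ∘ mfn (natEmb 0) = g := by funext a; simp [hk']
      have h2 : k ∘ mfn (natEmb 1) = h := by
        funext a; simp only [hk', Function.comp_apply, kglue_mfn]
        rw [if_neg (Ne.symm tag_ne)]
      have := hk k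
      rw [mem_preimage, h1, h2] at this
      exact this

lemma sigma_exists {D : Set (β × G)} (hD : IsSigma11 (tP t) D) :
    IsSigma11 t {x | ∃ g : G, (x, g) ∈ D} := by
  have : {x : β | ∃ g : G, (x, g) ∈ D}ᶜ = {x | ∀ g : G, (x, g) ∈ Dᶜ} := by
    ext x; simp [not_exists]
  show IsPi11 t _
  rw [this]
  exact pi_forall hD

lemma pi_inter {A B : Set β} (hA : IsPi11 t A) (hB : IsPi11 t B) : IsPi11 t (A ∩ B) := by
  have : A ∩ B = ⋂ i : Omega1, (if i = natEmb 0 then A else B) := by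
    ext x
    simp only [mem_inter_iff, mem_iInter]
    constructor
    · intro ⟨h1, h2⟩ i; split <;> assumption
    · intro h
      have h1 := h (natEmb 0); have h2 := h (natEmb 1)
      rw [if_pos rfl] at h1; rw [if_neg (Ne.symm tag_ne)] at h2
      exact ⟨h1, h2⟩
  rw [this]
  exact pi_iInter (fun i => by split <;> assumption)

lemma pi_union {A B : Set β} (hA : IsPi11 t A) (hB : IsPi11 t B) : IsPi11 t (A ∪ B) := by
  have : A ∪ B = ⋃ i : Omega1, (if i = natEmb 0 then A else B) := by
    ext x
    simp only [mem_union, mem_iUnion]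
    constructor
    · rintro (h | h)
      · exact ⟨natEmb 0, by rwa [if_pos rfl]⟩
      · exact ⟨natEmb 1, by rwa [if_neg (Ne.symm tag_ne)]⟩
    · rintro ⟨i, hi⟩
      revert hi; split <;> intro h
      · exact Or.inl h
      · exact Or.inr h
  rw [this]
  exact pi_iUnion (fun i => by split <;> assumption)

lemma delta_congr {A B : Set β} (h : A = B) (hA : IsDelta11 t A) : IsDelta11 t B := h ▸ hA

lemma delta_compl {A : Set β} (hA : IsDelta11 t A) : IsDelta11 t Aᶜ :=
  ⟨hA.2, show IsPi11 t Aᶜᶜ by rw [compl_compl]; exact hA.1⟩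

lemma delta_const (p : Prop) : IsDelta11 t {_x : β | p} := by
  by_cases h : p
  · have : {_x : β | p} = univ := by ext; simpa
    rw [this]
    exact ⟨pi_univ, show IsPi11 t (univ : Set β)ᶜ by rw [compl_univ]; exact pi_empty⟩
  · have : {_x : β | p} = ∅ := by ext; simpa
    rw [this]
    exact ⟨pi_empty, show IsPi11 t (∅ : Set β)ᶜ by rw [compl_empty]; exact pi_univ⟩

lemma delta_iInter {f : Omega1 → Set β} (h : ∀ i, IsDelta11 t (f i)) :
    IsDelta11 t (⋂ i, f i) := by
  refine ⟨pi_iInter (fun i => (h i).1), show IsPi11 t (⋂ i, f i)ᶜ from ?_⟩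
  rw [compl_iInter]
  exact pi_iUnion (fun i => (h i).2)

lemma delta_iUnion {f : Omega1 → Set β} (h : ∀ i, IsDelta11 t (f i)) :
    IsDelta11 t (⋃ i, f i) := by
  refine ⟨pi_iUnion (fun i => (h i).1), show IsPi11 t (⋃ i, f i)ᶜ from ?_⟩
  rw [compl_iUnion]
  exact pi_iInter (fun i => (h i).2)

lemma delta_inter {A B : Set β} (hA : IsDelta11 t A) (hB : IsDelta11 t B) :
    IsDelta11 t (A ∩ B) :=
  ⟨pi_inter hA.1 hB.1, show IsPi11 t (A ∩ B)ᶜ by rw [compl_inter]; exact pi_union hA.2 hB.2⟩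

lemma delta_union {A B : Set β} (hA : IsDelta11 t A) (hB : IsDelta11 t B) :
    IsDelta11 t (A ∪ B) :=
  ⟨pi_union hA.1 hB.1, show IsPi11 t (A ∪ B)ᶜ by rw [compl_union]; exact pi_inter hA.2 hB.2⟩

/-- reindexed unions/intersections along an injection into `Omega1`. -/
lemma delta_iUnion' {ι : Type} (e : ι → Omega1) (he : Function.Injective e)
    {f : ι → Set β} (h : ∀ i, IsDelta11 t (f i)) : IsDelta11 t (⋃ i, f i) := by
  have heq : (⋃ i, f i) = ⋃ j : Omega1, (if hj : ∃ i, e i = j then f hj.choose else ∅) := by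
    ext x
    simp only [mem_iUnion]
    constructor
    · rintro ⟨i, hi⟩
      refine ⟨e i, ?_⟩
      have hj : ∃ i', e i' = e i := ⟨i, rfl⟩
      rw [dif_pos hj]
      have : hj.choose = i := he hj.choose_spec
      rwa [this]
    · rintro ⟨j, hj⟩
      split_ifs at hj with hx
      · exact ⟨hx.choose, hj⟩
      · simp at hj
  rw [heq]
  refine delta_iUnion (fun j => ?_)
  split_ifs with hx
  · exact h _
  · exact delta_congr (by simp) (delta_const False)

lemma delta_iInter' {ι : Type} (e : ι → Omega1) (he : Function.Injective e)
    {f : ι → Set β} (h : ∀ i, IsDelta11 t (f i)) : IsDelta11 t (⋂ i, f i) := by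
  have : (⋂ i, f i) = (⋃ i, (f i)ᶜ)ᶜ := by rw [compl_iUnion]; simp
  rw [this]
  exact delta_compl (delta_iUnion' e he (fun i => delta_compl (h i)))

lemma pi_iUnion' {ι : Type} (e : ι → Omega1) (he : Function.Injective e)
    {f : ι → Set β} (h : ∀ i, IsPi11 t (f i)) : IsPi11 t (⋃ i, f i) := by
  have heq : (⋃ i, f i) = ⋃ j : Omega1, (if hj : ∃ i, e i = j then f hj.choose else ∅) := by
    ext x
    simp only [mem_iUnion]
    constructor
    · rintro ⟨i, hi⟩
      refine ⟨e i, ?_⟩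
      have hj : ∃ i', e i' = e i := ⟨i, rfl⟩
      rw [dif_pos hj]
      have : hj.choose = i := he hj.choose_spec
      rwa [this]
    · rintro ⟨j, hj⟩
      split_ifs at hj with hx
      · exact ⟨hx.choose, hj⟩
      · simp at hj
  rw [heq]
  refine pi_iUnion (fun j => ?_)
  split_ifs with hx
  · exact h _
  · exact pi_empty

lemma pi_iInter' {ι : Type} (e : ι → Omega1) (he : Function.Injective e)
    {f : ι → Set β} (h : ∀ i, IsPi11 t (f i)) : IsPi11 t (⋂ i, f i) := by
  have heq : (⋂ i, f i) = ⋂ j : Omega1, (if hj : ∃ i, e i = j then f hj.choose else univ) := by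
    ext x
    simp only [mem_iInter]
    constructor
    · intro hx j
      split_ifs with hj
      · exact hx _
      · trivial
    · intro hx i
      have := hx (e i)
      have hj : ∃ i', e i' = e i := ⟨i, rfl⟩
      rw [dif_pos hj] at this
      have he' : hj.choose = i := he hj.choose_spec
      rwa [he'] at this
  rw [heq]
  refine pi_iInter (fun j => ?_)
  split_ifs with hx
  · exact h _
  · exact pi_univ

/-- reading a `Δ`-family at a `g`-coordinate. -/
lemma delta_read (w : Omega1) {S : Omega1 → Set (β × G)}
    (hS : ∀ c, IsDelta11 (tP t) (S c)) : IsDelta11 (tP t) {z : β × G | z ∈ S (z.2 w)} := by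
  have : {z : β × G | z ∈ S (z.2 w)} = ⋃ c, ({z : β × G | z.2 w = c} ∩ S c) := by
    ext z
    simp only [mem_setOf_eq, mem_iUnion, mem_inter_iff]
    exact ⟨fun h => ⟨z.2 w, rfl, h⟩, by rintro ⟨c, rfl, h⟩; exact h⟩
  rw [this]
  refine delta_iUnion (fun c => delta_inter ?_ (hS c))
  constructor
  · exact pi_open (isOpen_sndCoord w c)
  · show IsPi11 (tP t) _
    have : {z : β × G | z.2 w = c}ᶜ = ⋃ d, {z : β × G | d ≠ c ∧ z.2 w = d} := by
      ext z
      simp only [mem_compl_iff, mem_setOf_eq, mem_iUnion]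
      constructor
      · intro h; exact ⟨z.2 w, h, rfl⟩
      · rintro ⟨d, hd, h⟩; rw [h]; exact hd
    rw [this]
    refine pi_iUnion (fun d => pi_open ?_)
    by_cases hd : d = c
    · have : {z : β × G | d ≠ c ∧ z.2 w = d} = ∅ := by ext z; simp [hd]
      rw [this]; exact @isOpen_empty _ (tP t)
    · have : {z : β × G | d ≠ c ∧ z.2 w = d} = {z : β × G | z.2 w = d} := by
        ext z; simp [hd]
      rw [this]; exact isOpen_sndCoord w d

lemma delta_sndCoord (a b : Omega1) : IsDelta11 (tP t) {z : β × G | z.2 a = b} := by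
  have := @delta_read β t a (fun c => {_z : β × G | c = b}) (fun c => delta_const _)
  exact delta_congr (by ext z; simp) this

lemma delta_pOfG (w : Omega1) (P : Omega1 → Prop) :
    IsDelta11 (tP t) {z : β × G | P (z.2 w)} :=
  delta_read w (fun c => delta_const (P c))

lemma delta_pOfG2 (w w' : Omega1) (P : Omega1 → Omega1 → Prop) :
    IsDelta11 (tP t) {z : β × G | P (z.2 w) (z.2 w')} :=
  delta_read w (fun c => delta_pOfG w' (P c))

end Machinery

/-! ### Omega1 and ordinal facts -/

section OrdFacts

lemma ordOf_eq_typein (a : Omega1) : ordOf a = Ordinal.typein ((· < ·) : Omega1 → Omega1 → Prop) a := by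
  have h : IsWellOrder {b // b < a} (fun x y : {b // b < a} => x.1 < y.1) :=
    inferInstanceAs (IsWellOrder _ (Subrel ((· < ·) : Omega1 → Omega1 → Prop) (· < a)))
  rw [ordOf, treeHeight, dif_pos h]
  exact (Ordinal.type_subrel ((· < ·) : Omega1 → Omega1 → Prop) a).symm ▸ rfl

lemma ordOf_lt_omega1 (a : Omega1) : ordOf a < omega1Ord := by
  rw [ordOf_eq_typein]
  have := Ordinal.typein_lt_type ((· < ·) : Omega1 → Omega1 → Prop) a
  rwa [Ordinal.type_toType] at this

lemma ordOf_lt_iff {a b : Omega1} : ordOf a < ordOf b ↔ a < b := by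
  rw [ordOf_eq_typein, ordOf_eq_typein]
  exact Ordinal.typein_lt_typein _

lemma ordOf_le_iff {a b : Omega1} : ordOf a ≤ ordOf b ↔ a ≤ b := by
  constructor
  · intro h
    by_contra hab
    push_neg at hab
    exact absurd (ordOf_lt_iff.2 hab) (not_lt.2 h)
  · intro h
    rcases eq_or_lt_of_le h with rfl | h
    · exact le_rfl
    · exact (ordOf_lt_iff.2 h).le

lemma ordOf_inj {a b : Omega1} (h : ordOf a = ordOf b) : a = b := by
  rw [ordOf_eq_typein, ordOf_eq_typein] at h
  exact Ordinal.typein_injective _ h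

/-- the element of `Omega1` with order-type `ξ`. -/
def rep (ξ : Ordinal) (h : ξ < omega1Ord) : Omega1 :=
  Ordinal.enum ((· < ·) : Omega1 → Omega1 → Prop) ⟨ξ, by rwa [Ordinal.type_toType]⟩

lemma ordOf_rep (ξ : Ordinal) (h : ξ < omega1Ord) : ordOf (rep ξ h) = ξ := by
  rw [ordOf_eq_typein]
  exact Ordinal.typein_enum _ _

lemma rep_ordOf (a : Omega1) : rep (ordOf a) (ordOf_lt_omega1 a) = a := by
  apply ordOf_inj
  rw [ordOf_rep]

lemma omega1_isLimit : Order.IsSuccLimit omega1Ord :=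
  Cardinal.isSuccLimit_ord (Cardinal.aleph0_le_aleph 1)

/-- countable subsets of `Omega1` are exactly the bounded ones. -/
lemma bounded_of_countable {S : Set Omega1} (h : S.Countable) : ∃ β, ∀ a ∈ S, a < β := by
  have hS : Cardinal.mk S < (Cardinal.aleph 1) :=
    lt_of_le_of_lt h.le_aleph0 Cardinal.aleph0_lt_aleph_one
  have hcof : Cardinal.mk S < omega1Ord.cof := by
    rwa [Cardinal.isRegular_aleph_one.cof_eq]
  have hsup : (⨆ a : S, (ordOf a.1 + 1)) < omega1Ord := by
    refine Ordinal.iSup_lt_ord hcof (fun a => ?_)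
    rw [Ordinal.add_one_eq_succ]
    exact omega1_isLimit.succ_lt (ordOf_lt_omega1 a.1)
  refine ⟨rep _ hsup, fun a ha => ?_⟩
  rw [← ordOf_lt_iff, ordOf_rep]
  have h1 : ordOf a < ordOf a + 1 := by
    rw [Ordinal.add_one_eq_succ]; exact Order.lt_succ _
  exact lt_of_lt_of_le h1 (Ordinal.le_iSup (fun a : S => (ordOf a.1 + 1)) ⟨a, ha⟩)

lemma countable_Iio (β : Omega1) : {a : Omega1 | a < β}.Countable := by
  refine (Cardinal.countable_iff_lt_aleph_one _).2 ?_
  have h := ordOf_lt_omega1 β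
  rw [ordOf_eq_typein, Cardinal.lt_ord] at h
  rw [Ordinal.card_typein] at h
  exact h

lemma countable_of_bounded {S : Set Omega1} {β : Omega1} (h : ∀ a ∈ S, a < β) :
    S.Countable :=
  Set.Countable.mono (fun a ha => h a ha) (countable_Iio β)

lemma exists_gt_omega1 (a : Omega1) : ∃ b, a < b := by
  rcases bounded_of_countable (Set.countable_singleton a) with ⟨β, hβ⟩
  exact ⟨β, hβ a rfl⟩

/-- a fixed "shift" function with `shiftFn a ≠ a`. -/
def shiftFn (a : Omega1) : Omega1 := (exists_gt_omega1 a).choose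

lemma shiftFn_ne (a : Omega1) : shiftFn a ≠ a := by
  intro h
  have := (exists_gt_omega1 a).choose_spec
  rw [show (exists_gt_omega1 a).choose = shiftFn a from rfl, h] at this
  exact lt_irrefl a this

end OrdFacts

/-! ### tree order facts -/

section TreeFacts

variable {r : Omega1 → Omega1 → Prop}

/-- the predecessor relation on the predecessors of `b`. -/
abbrev predRel (r : Omega1 → Omega1 → Prop) (b : Omega1) :
    {a // r a b} → {a // r a b} → Prop := fun x y => r x.1 y.1

/-- the first-order tree axioms. -/
structure TreeFO (r : Omega1 → Omega1 → Prop) : Prop where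
  trans : ∀ a b c, r a b → r b c → r a c
  irrefl : ∀ a, ¬ r a a
  trichot : ∀ a b c, r a c → r b c → (r a b ∨ a = b ∨ r b a)

lemma TreeFO.of_isTreeOrder (h : IsTreeOrder r) : TreeFO r :=
  ⟨h.trans, h.irrefl, h.pred_trichot⟩

variable (hfo : TreeFO r)

/-- well-foundedness of `r` from a strictly monotone map to `Omega1`. -/
lemma wf_of_hfun {h : Omega1 → Omega1} (hh : ∀ p a, r p a → h p < h a) :
    WellFounded r := by
  have : Subrelation r (InvImage (· < ·) h) := fun {p a} hpa => hh p a hpa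
  exact Subrelation.wf this (InvImage.wf h (wellFounded_lt))

/-- well-foundedness of `r` from `pred_wellOrdered`. -/
lemma wf_of_isTreeOrder (hto : IsTreeOrder r) : WellFounded r := by
  rw [WellFounded.wellFounded_iff_has_min]
  intro s hs
  rcases hs with ⟨c, hc⟩
  by_cases hcmin : ∀ x ∈ s, ¬ r x c
  · exact ⟨c, hc, hcmin⟩
  · push_neg at hcmin
    rcases hcmin with ⟨x₀, hx₀s, hx₀⟩
    have hSne : (s ∩ {a | r a c}).Nonempty := ⟨x₀, hx₀s, hx₀⟩
    rcases hto.pred_wellOrdered c (s ∩ {a | r a c}) (fun a ha => ha.2) hSne with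
      ⟨m, hm, hmin⟩
    refine ⟨m, hm.1, fun x hx hxm => ?_⟩
    have hxc : r x c := hto.trans _ _ _ hxm hm.2
    rcases hmin x ⟨hx, hxc⟩ with rfl | hmx
    · exact hto.irrefl m hxm
    · exact hto.irrefl x (hto.trans _ _ _ hxm hmx)

include hfo

/-- the predecessors of a node are well-ordered whenever `r` is well-founded. -/
lemma predRel_isWellOrder (hwf : WellFounded r) (b : Omega1) :
    IsWellOrder {a // r a b} (predRel r b) := by
  refine { trichotomous := ?_, wf := ?_ }
  · exact InvImage.wf Subtype.val hwf
  · intro x y hxy hyx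
    rcases hfo.trichot x.1 y.1 b x.2 y.2 with h | h | h
    · exact absurd h hxy
    · exact Subtype.ext h
    · exact absurd h hyx

/-- `treeHeight` unfolded. -/
lemma treeHeight_eq (hwf : WellFounded r) (b : Omega1) :
    treeHeight r b = @Ordinal.type _ (predRel r b) (predRel_isWellOrder hfo hwf b) := by
  rw [treeHeight, dif_pos (predRel_isWellOrder hfo hwf b)]

/-- the predecessors of a predecessor `a` of `b` are an initial segment. -/
lemma treeHeight_pred (hwf : WellFounded r) {a b : Omega1} (hab : r a b) :
    treeHeight r a =
      @Ordinal.typein _ (predRel r b) (predRel_isWellOrder hfo hwf b) ⟨a, hab⟩ := by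
  letI := predRel_isWellOrder hfo hwf b
  letI := predRel_isWellOrder hfo hwf a
  rw [treeHeight_eq hfo hwf]
  rw [← Ordinal.type_subrel (predRel r b) ⟨a, hab⟩]
  refine Ordinal.type_eq.2 ⟨?_⟩
  refine ⟨⟨fun p => ⟨⟨p.1, hfo.trans _ _ _ p.2 hab⟩, p.2⟩,
      fun x => ⟨x.1.1, x.2⟩, fun p => rfl, fun x => rfl⟩, Iff.rfl⟩

lemma treeHeight_lt_of_pred (hwf : WellFounded r) {a b : Omega1} (hab : r a b) :
    treeHeight r a < treeHeight r b := by
  letI := predRel_isWellOrder hfo hwf b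
  rw [treeHeight_pred hfo hwf hab, treeHeight_eq hfo hwf]
  exact Ordinal.typein_lt_type _ _

/-- every ordinal below the height of `b` is the height of a predecessor. -/
lemma exists_pred_at (hwf : WellFounded r) {b : Omega1} {ξ : Ordinal}
    (hξ : ξ < treeHeight r b) : ∃ a, r a b ∧ treeHeight r a = ξ := by
  letI := predRel_isWellOrder hfo hwf b
  rw [treeHeight_eq hfo hwf] at hξ
  set w := Ordinal.enum (predRel r b) ⟨ξ, hξ⟩ with hw
  refine ⟨w.1, w.2, ?_⟩
  have : (⟨w.1, w.2⟩ : {a // r a b}) = w := rfl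
  rw [treeHeight_pred hfo hwf w.2, this, hw, Ordinal.typein_enum]

/-- heights of predecessors are bounded iff the height is below `ω₁`. -/
lemma treeHeight_lt_omega1_of_bounded (hwf : WellFounded r) {b β : Omega1}
    (hb : ∀ a, r a b → a < β) : treeHeight r b < omega1Ord := by
  rw [treeHeight_eq hfo hwf, Cardinal.lt_ord, Ordinal.card_type]
  have h2 : {a | r a b}.Countable := countable_of_bounded (S := {a | r a b}) hb
  exact (Cardinal.countable_iff_lt_aleph_one {a | r a b}).1 h2

lemma preds_countable_of_height_lt (hwf : WellFounded r) {b : Omega1}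
    (hb : treeHeight r b < omega1Ord) : {a | r a b}.Countable := by
  rw [treeHeight_eq hfo hwf, Cardinal.lt_ord, Ordinal.card_type] at hb
  exact (Cardinal.countable_iff_lt_aleph_one {a | r a b}).2 hb

/-- the "height function" characterisation. -/
def HFun (r : Omega1 → Omega1 → Prop) (h : Omega1 → Omega1) : Prop :=
  ∀ a, (∀ p, r p a → h p < h a) ∧ (∀ β, (∀ p, r p a → h p < β) → h a ≤ β)

/-- any `HFun` computes the heights. -/
lemma hfun_heights {h : Omega1 → Omega1} (hh : HFun r h) :
    ∀ a, treeHeight r a = ordOf (h a) := by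
  have hwf : WellFounded r := wf_of_hfun (fun p a hpa => (hh a).1 p hpa)
  intro a
  induction a using WellFounded.induction hwf with
  | _ a IH =>
    have hle : treeHeight r a ≤ ordOf (h a) := by
      by_contra hlt
      push_neg at hlt
      rcases exists_pred_at hfo hwf hlt with ⟨p, hpa, hp⟩
      have := IH p hpa
      rw [this] at hp
      exact absurd ((hh a).1 p hpa) (by rw [ordOf_inj hp]; exact lt_irrefl _)
    have hge : ordOf (h a) ≤ treeHeight r a := by
      have halt : treeHeight r a < omega1Ord := lt_of_le_of_lt hle (ordOf_lt_omega1 _)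
      have hba : h a ≤ rep _ halt := by
        refine (hh a).2 _ (fun p hpa => ?_)
        rw [← ordOf_lt_iff, ordOf_rep, ← IH p hpa]
        exact treeHeight_lt_of_pred hfo hwf hpa
      calc ordOf (h a) ≤ ordOf (rep _ halt) := ordOf_le_iff.2 hba
      _ = treeHeight r a := ordOf_rep _ _
    exact le_antisymm hle hge

/-- existence of an `HFun` when all heights are `< ω₁`. -/
lemma hfun_exists (hwf : WellFounded r) (hlt : ∀ a, treeHeight r a < omega1Ord) :
    ∃ h, HFun r h ∧ ∀ a, h a = rep _ (hlt a) := by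
  refine ⟨fun a => rep _ (hlt a), fun a => ⟨?_, ?_⟩, fun a => rfl⟩
  · intro p hpa
    rw [← ordOf_lt_iff, ordOf_rep, ordOf_rep]
    exact treeHeight_lt_of_pred hfo hwf hpa
  · intro β hβ
    rw [← ordOf_le_iff, ordOf_rep]
    by_contra hcon
    push_neg at hcon
    rcases exists_pred_at hfo hwf hcon with ⟨p, hpa, hp⟩
    have := hβ p hpa
    rw [← ordOf_lt_iff, ordOf_rep] at this
    rw [hp] at this
    exact lt_irrefl _ this

/-- from the first-order axioms plus a height function, `pred_wellOrdered` holds. -/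
lemma pred_wellOrdered_of_wf (hwf : WellFounded r) :
    ∀ c, ∀ S : Set Omega1, (∀ a ∈ S, r a c) → S.Nonempty →
      ∃ m ∈ S, ∀ a ∈ S, m = a ∨ r m a := by
  intro c S hS hne
  rcases hwf.has_min S hne with ⟨m, hm, hmin⟩
  refine ⟨m, hm, fun a ha => ?_⟩
  rcases hfo.trichot a m c (hS a ha) (hS m hm) with h | h | h
  · exact absurd h (hmin a ha)
  · exact Or.inl h.symm
  · exact Or.inr h

end TreeFacts


/-! ### a small "definability" DSL -/

section DSL

variable {β : Type} {t : TopologicalSpace β}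

/-- `P` defines a `Δ¹₁` subset. -/
def D11 (t : TopologicalSpace β) (P : β → Prop) : Prop := IsDelta11 t {x | P x}

lemma d_const (p : Prop) : D11 t (fun _ => p) := delta_const p

lemma d_not {P : β → Prop} (h : D11 t P) : D11 t (fun x => ¬ P x) := by
  have := delta_compl h
  rwa [compl_setOf] at this

lemma d_and {P Q : β → Prop} (hP : D11 t P) (hQ : D11 t Q) :
    D11 t (fun x => P x ∧ Q x) := by
  have := delta_inter hP hQ
  rwa [← setOf_and] at this

lemma d_or {P Q : β → Prop} (hP : D11 t P) (hQ : D11 t Q) :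
    D11 t (fun x => P x ∨ Q x) := by
  have := delta_union hP hQ
  rwa [← setOf_or] at this

lemma d_imp {P Q : β → Prop} (hP : D11 t P) (hQ : D11 t Q) :
    D11 t (fun x => P x → Q x) := by
  have h := d_or (d_not hP) hQ
  have he : {x | ¬ P x ∨ Q x} = {x | P x → Q x} := by
    ext x; simp [imp_iff_not_or]
  rwa [D11, he] at h

lemma d_iff {P Q : β → Prop} (hP : D11 t P) (hQ : D11 t Q) :
    D11 t (fun x => P x ↔ Q x) := by
  have h := d_and (d_imp hP hQ) (d_imp hQ hP)
  have he : {x | (P x → Q x) ∧ (Q x → P x)} = {x | P x ↔ Q x} := by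
    ext x; simp only [mem_setOf_eq]; tauto
  rwa [D11, he] at h

lemma d_forall {P : Omega1 → β → Prop} (h : ∀ i, D11 t (P i)) :
    D11 t (fun x => ∀ i, P i x) := by
  have := delta_iInter (fun i => h i)
  rwa [← setOf_forall] at this

lemma d_exists {P : Omega1 → β → Prop} (h : ∀ i, D11 t (P i)) :
    D11 t (fun x => ∃ i, P i x) := by
  have := delta_iUnion (fun i => h i)
  rwa [← setOf_exists] at this

lemma d_forall' {ι : Type} (e : ι → Omega1) (he : Function.Injective e)
    {P : ι → β → Prop} (h : ∀ i, D11 t (P i)) : D11 t (fun x => ∀ i, P i x) := by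
  have := delta_iInter' e he (fun i => h i)
  rwa [← setOf_forall] at this

lemma d_exists' {ι : Type} (e : ι → Omega1) (he : Function.Injective e)
    {P : ι → β → Prop} (h : ∀ i, D11 t (P i)) : D11 t (fun x => ∃ i, P i x) := by
  have := delta_iUnion' e he (fun i => h i)
  rwa [← setOf_exists] at this

lemma d_forallN {P : ℕ → β → Prop} (h : ∀ n, D11 t (P n)) :
    D11 t (fun x => ∀ n, P n x) := d_forall' natEmb natEmb_inj h

lemma d_existsN {P : ℕ → β → Prop} (h : ∀ n, D11 t (P n)) :
    D11 t (fun x => ∃ n, P n x) := d_exists' natEmb natEmb_inj h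

lemma d_congr {P Q : β → Prop} (h : ∀ x, P x ↔ Q x) (hP : D11 t P) : D11 t Q := by
  have : {x | P x} = {x | Q x} := by ext x; exact h x
  exact delta_congr this hP

/-- reading a `Δ` family at the value of a `g`-coordinate. -/
lemma d_read (w : Omega1) {P : Omega1 → (β × G) → Prop}
    (h : ∀ c, D11 (tP t) (P c)) : D11 (tP t) (fun z => P (z.2 w) z) :=
  delta_read w (fun c => h c)

lemma d_sndEq (w : Omega1) (c : Omega1) : D11 (tP t) (fun z => z.2 w = c) :=
  delta_sndCoord w c

lemma d_sndProp (w : Omega1) (P : Omega1 → Prop) : D11 (tP t) (fun z => P (z.2 w)) :=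
  delta_pOfG w P

lemma d_sndProp2 (w w' : Omega1) (P : Omega1 → Omega1 → Prop) :
    D11 (tP t) (fun z => P (z.2 w) (z.2 w')) := delta_pOfG2 w w' P

end DSL

/-! ### atoms over the coding space -/

section Atoms

abbrev XX : Type := Omega1 → Bool
abbrev tX : TopologicalSpace XX := gbsTop Omega1 Bool

lemma d_baseX (w : Omega1) (v : Bool) : D11 tX (fun x : XX => x w = v) := by
  constructor
  · exact pi_open (isOpen_coord w v)
  · show IsPi11 tX {x : XX | x w = v}ᶜ
    have : {x : XX | x w = v}ᶜ = {x : XX | x w = !v} := by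
      ext x
      simp only [mem_compl_iff, mem_setOf_eq]
      cases h : x w <;> cases v <;> simp
    rw [this]
    exact pi_open (isOpen_coord w (!v))

lemma d_fstX (w : Omega1) (v : Bool) : D11 (tP tX) (fun z : XX × G => z.1 w = v) := by
  constructor
  · refine pi_open ?_
    letI := tX; letI := tG
    exact continuous_fst.isOpen_preimage _ (isOpen_coord w v)
  · show IsPi11 (tP tX) {z : XX × G | z.1 w = v}ᶜ
    have : {z : XX × G | z.1 w = v}ᶜ = {z : XX × G | z.1 w = !v} := by
      ext z
      simp only [mem_compl_iff, mem_setOf_eq]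
      cases h : z.1 w <;> cases v <;> simp
    rw [this]
    refine pi_open ?_
    letI := tX; letI := tG
    exact continuous_fst.isOpen_preimage _ (isOpen_coord w (!v))

/-- the basic relation atom. -/
lemma d_rel (a b : Omega1) : D11 (tP tX) (fun z : XX × G => codedRel z.1 a b) :=
  d_fstX (pairEquiv (a, b)) true

lemma d_rel_base (a b : Omega1) : D11 tX (fun x : XX => codedRel x a b) :=
  d_baseX (pairEquiv (a, b)) true

/-- relation atom with `g`-valued arguments. -/
lemma d_relG (u : Omega1) (b : Omega1) :
    D11 (tP tX) (fun z : XX × G => codedRel z.1 (z.2 u) b) :=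
  d_read u (fun c => d_rel c b)

lemma d_relG' (a : Omega1) (u : Omega1) :
    D11 (tP tX) (fun z : XX × G => codedRel z.1 a (z.2 u)) :=
  d_read u (fun c => d_rel a c)

lemma d_relGG (u v : Omega1) :
    D11 (tP tX) (fun z : XX × G => codedRel z.1 (z.2 u) (z.2 v)) :=
  d_read u (fun c => d_relG' c v)

/-! ### slots and gluing -/

/-- slot for role `j` at index `w`. -/
def slot (j : ℕ) (w : Omega1) : Omega1 := mfn (natEmb j) w

lemma slot_inj (j : ℕ) : Function.Injective (slot j) := mfn_inj _

/-- glue role functions into a single `g`. -/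
def roleGlue (F : ℕ → Omega1 → Omega1) : G :=
  kglue (fun tg a => if h : ∃ j, natEmb j = tg then F h.choose a else a)

lemma roleGlue_slot (F : ℕ → Omega1 → Omega1) (j : ℕ) (w : Omega1) :
    roleGlue F (slot j w) = F j w := by
  rw [roleGlue, slot, kglue_mfn]
  have h : ∃ j', natEmb j' = natEmb j := ⟨j, rfl⟩
  rw [dif_pos h]
  have : h.choose = j := natEmb_inj h.choose_spec
  rw [this]

/-- standard roles. -/
def hslot (a : Omega1) : Omega1 := slot 1 a
def cslot (a : Omega1) : Omega1 := slot 2 a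
def eslot (a : Omega1) : Omega1 := slot 3 a
def fslot (n : ℕ) : Omega1 := slot 4 (natEmb n)
def aslot (n : ℕ) (a : Omega1) : Omega1 := slot 5 (mfn (natEmb n) a)

/-- the decoded objects. -/
def hOf (z : XX × G) (a : Omega1) : Omega1 := z.2 (hslot a)
def czOf (z : XX × G) : Set Omega1 := {c | z.2 (cslot c) = c}
def eOf (z : XX × G) (a : Omega1) : Omega1 := z.2 (eslot a)
def fOf (z : XX × G) (n : ℕ) : Omega1 := z.2 (fslot n)
def azOf (z : XX × G) (n : ℕ) : Set Omega1 := {a | z.2 (aslot n a) = a}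

end Atoms

/-! ### concrete formulas -/

section Formulas

/-- first-order axioms for a regular tree code (plus boundedness of predecessors). -/
def SFO : Set XX := {x |
  (∀ a, ∀ b, ∀ c, codedRel x a b → codedRel x b c → codedRel x a c) ∧
  (∀ a, ¬ codedRel x a a) ∧
  (∀ a, ∀ b, ∀ c, codedRel x a c → codedRel x b c →
    (codedRel x a b ∨ a = b ∨ codedRel x b a)) ∧
  (∃ rt, ∀ a, a = rt ∨ codedRel x rt a) ∧
  (∀ s, ∃ t₁, ∃ t₂, t₁ ≠ t₂ ∧
    (codedRel x s t₁ ∧ ¬ ∃ u, codedRel x s u ∧ codedRel x u t₁) ∧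
    (codedRel x s t₂ ∧ ¬ ∃ u, codedRel x s u ∧ codedRel x u t₂)) ∧
  (∀ c, ∃ β, ∀ a, codedRel x a c → a < β)}

lemma delta_SFO : IsDelta11 tX SFO := by
  refine d_and ?_ (d_and ?_ (d_and ?_ (d_and ?_ (d_and ?_ ?_))))
  · exact d_forall (fun a => d_forall (fun b => d_forall (fun c =>
      d_imp (d_rel_base a b) (d_imp (d_rel_base b c) (d_rel_base a c)))))
  · exact d_forall (fun a => d_not (d_rel_base a a))
  · exact d_forall (fun a => d_forall (fun b => d_forall (fun c =>
      d_imp (d_rel_base a c) (d_imp (d_rel_base b c)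
        (d_or (d_rel_base a b) (d_or (d_const _) (d_rel_base b a)))))))
  · exact d_exists (fun rt => d_forall (fun a => d_or (d_const _) (d_rel_base rt a)))
  · refine d_forall (fun s => d_exists (fun t₁ => d_exists (fun t₂ =>
      d_and (d_const _) (d_and (d_and (d_rel_base s t₁) (d_not (d_exists (fun u =>
        d_and (d_rel_base s u) (d_rel_base u t₁)))))
        (d_and (d_rel_base s t₂) (d_not (d_exists (fun u =>
          d_and (d_rel_base s u) (d_rel_base u t₂)))))))))
  · exact d_forall (fun c => d_exists (fun β => d_forall (fun a =>
      d_imp (d_rel_base a c) (d_const _))))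

/-- a descending `ℕ`-sequence coded in `g`. -/
def DDesc : Set (XX × G) := {z | ∀ n : ℕ, codedRel z.1 (fOf z (n + 1)) (fOf z n)}

lemma delta_DDesc : IsDelta11 (tP tX) DDesc :=
  d_forallN (fun n => d_relGG (fslot (n + 1)) (fslot n))

/-- the height function certificate. -/
def DCert : Set (XX × G) := {z |
  (∀ a, ∀ p, codedRel z.1 p a → hOf z p < hOf z a) ∧
  (∀ a, ∀ β, (∀ p, codedRel z.1 p a → hOf z p < β) → hOf z a ≤ β)}

lemma delta_DCert : IsDelta11 (tP tX) DCert := by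
  refine d_and ?_ ?_
  · exact d_forall (fun a => d_forall (fun p =>
      d_imp (d_rel p a) (d_sndProp2 (hslot p) (hslot a) (· < ·))))
  · exact d_forall (fun a => d_forall (fun β =>
      d_imp (d_forall (fun p => d_imp (d_rel p a) (d_sndProp (hslot p) (· < β))))
        (d_sndProp (hslot a) (· ≤ β))))

/-- the conclusions about levels, expressed through the height function. -/
def DConc : Set (XX × G) := {z |
  (∀ β, ∃ c, hOf z c = β) ∧
  (∀ β, ∃ bd, ∀ a, hOf z a = β → a < bd) ∧
  (∀ s, ∀ β, hOf z s < β → ∃ tt, codedRel z.1 s tt ∧ hOf z tt = β)}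

lemma delta_DConc : IsDelta11 (tP tX) DConc := by
  refine d_and ?_ (d_and ?_ ?_)
  · exact d_forall (fun β => d_exists (fun c => d_sndProp (hslot c) (· = β)))
  · exact d_forall (fun β => d_exists (fun bd => d_forall (fun a =>
      d_imp (d_sndProp (hslot a) (· = β)) (d_const _))))
  · exact d_forall (fun s => d_forall (fun β =>
      d_imp (d_sndProp (hslot s) (· < β)) (d_exists (fun tt =>
        d_and (d_rel s tt) (d_sndProp (hslot tt) (· = β))))))

/-- an unbounded chain coded in `g`. -/
def DChain : Set (XX × G) := {z |
  (∀ a, ∀ b, a ∈ czOf z → b ∈ czOf z →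
    (a = b ∨ codedRel z.1 a b ∨ codedRel z.1 b a)) ∧
  (∀ β, ∃ a, a ∈ czOf z ∧ β < a)}

lemma delta_DChain : IsDelta11 (tP tX) DChain := by
  refine d_and ?_ ?_
  · exact d_forall (fun a => d_forall (fun b =>
      d_imp (d_sndEq (cslot a) a) (d_imp (d_sndEq (cslot b) b)
        (d_or (d_const _) (d_or (d_rel a b) (d_rel b a))))))
  · exact d_forall (fun β => d_exists (fun a =>
      d_and (d_sndEq (cslot a) a) (d_const _)))

/-- an unbounded antichain coded in `g`. -/
def DAnti : Set (XX × G) := {z |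
  (∀ a, ∀ b, a ∈ czOf z → b ∈ czOf z → a ≠ b →
    ¬ codedRel z.1 a b ∧ ¬ codedRel z.1 b a) ∧
  (∀ β, ∃ a, a ∈ czOf z ∧ β < a)}

lemma delta_DAnti : IsDelta11 (tP tX) DAnti := by
  refine d_and ?_ ?_
  · exact d_forall (fun a => d_forall (fun b =>
      d_imp (d_sndEq (cslot a) a) (d_imp (d_sndEq (cslot b) b)
        (d_imp (d_const _) (d_and (d_not (d_rel a b)) (d_not (d_rel b a)))))))
  · exact d_forall (fun β => d_exists (fun a =>
      d_and (d_sndEq (cslot a) a) (d_const _)))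

/-- a decomposition into countably many antichains coded in `g`. -/
def DDecomp : Set (XX × G) := {z |
  (∀ n : ℕ, ∀ a, ∀ b, a ∈ azOf z n → b ∈ azOf z n → a ≠ b →
    ¬ codedRel z.1 a b ∧ ¬ codedRel z.1 b a) ∧
  (∀ a, ∃ n : ℕ, a ∈ azOf z n)}

lemma delta_DDecomp : IsDelta11 (tP tX) DDecomp := by
  refine d_and ?_ ?_
  · exact d_forallN (fun n => d_forall (fun a => d_forall (fun b =>
      d_imp (d_sndEq (aslot n a) a) (d_imp (d_sndEq (aslot n b) b)
        (d_imp (d_const _) (d_and (d_not (d_rel a b)) (d_not (d_rel b a))))))))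
  · exact d_forall (fun a => d_existsN (fun n => d_sndEq (aslot n a) a))

/-- encoding of tuples. -/
def tupEnc : (n : ℕ) → (Fin n → Omega1) → Omega1
  | 0, _ => natEmb 0
  | n + 1, f => pairEquiv (f 0, tupEnc n (fun i => f i.succ))

lemma tupEnc_inj (n : ℕ) : Function.Injective (tupEnc n) := by
  induction n with
  | zero =>
    intro f f' _
    funext i
    exact absurd i.2 (by simp)
  | succ n IH =>
    intro f f' h
    have h2 := pairEquiv.injective h
    have h0 : f 0 = f' 0 := congrArg Prod.fst h2
    have ht : (fun i : Fin n => f i.succ) = (fun i : Fin n => f' i.succ) :=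
      IH (congrArg Prod.snd h2)
    funext i
    refine Fin.cases ?_ ?_ i
    · exact h0
    · intro j
      exact congrFun ht j

variable (R : Omega1 → Omega1 → Prop)

/-- a derived-tree club-embedding coded in `g`. -/
def DEmb (n : ℕ) (s : Fin n → Omega1) : Set (XX × G) := {z |
  IsClubIn (czOf z) ∧
  (∀ f : Fin n → Omega1, ∀ f' : Fin n → Omega1,
    f ∈ derivedRestrict R s (czOf z) → f' ∈ derivedRestrict R s (czOf z) →
    eOf z (tupEnc n f) = eOf z (tupEnc n f') → f = f') ∧
  (∀ f : Fin n → Omega1, ∀ f' : Fin n → Omega1,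
    f ∈ derivedRestrict R s (czOf z) → f' ∈ derivedRestrict R s (czOf z) →
    derivedLT R f f' →
    codedRel z.1 (eOf z (tupEnc n f)) (eOf z (tupEnc n f')))}

/-- the club conditions are `Δ`. -/
lemma delta_club : D11 (tP tX) (fun z => IsClubIn (czOf z)) := by
  refine d_and ?_ ?_
  · exact d_forall (fun a => d_exists (fun b =>
      d_and (d_sndEq (cslot b) b) (d_const _)))
  · exact d_forall (fun a => d_imp (d_const _) (d_imp
      (d_forall (fun b => d_imp (d_const _) (d_exists (fun c =>
        d_and (d_sndEq (cslot c) c) (d_const _)))))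
      (d_sndEq (cslot a) a)))

lemma delta_derivedMem (n : ℕ) (s : Fin n → Omega1) (f : Fin n → Omega1) :
    D11 (tP tX) (fun z => f ∈ derivedRestrict R s (czOf z)) := by
  refine d_and (d_const _) (d_exists (fun c => d_and (d_sndEq (cslot c) c) (d_const _)))

lemma delta_DEmb (n : ℕ) (s : Fin n → Omega1) : IsDelta11 (tP tX) (DEmb R n s) := by
  refine d_and delta_club (d_and ?_ ?_)
  · exact d_forall' (tupEnc n) (tupEnc_inj n) (fun f =>
      d_forall' (tupEnc n) (tupEnc_inj n) (fun f' =>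
        d_imp (delta_derivedMem R n s f) (d_imp (delta_derivedMem R n s f')
          (d_imp (d_sndProp2 (eslot (tupEnc n f)) (eslot (tupEnc n f')) (· = ·))
            (d_const _)))))
  · exact d_forall' (tupEnc n) (tupEnc_inj n) (fun f =>
      d_forall' (tupEnc n) (tupEnc_inj n) (fun f' =>
        d_imp (delta_derivedMem R n s f) (d_imp (delta_derivedMem R n s f')
          (d_imp (d_const _)
            (d_relGG (eslot (tupEnc n f)) (eslot (tupEnc n f')))))))

/-- source and target restricted-node conditions for a club isomorphism. -/
def TRsrc (Q : Omega1 → Omega1 → Prop) (z : XX × G) (a : Omega1) : Prop :=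
  ∃ c, c ∈ czOf z ∧ treeHeight Q a = ordOf c

def TRtgt (z : XX × G) (a : Omega1) : Prop :=
  ∃ c, c ∈ czOf z ∧ hOf z a = c

/-- a club isomorphism from the fixed tree `Q` onto the coded tree, coded in `g`. -/
def DCI (Q : Omega1 → Omega1 → Prop) : Set (XX × G) := {z |
  IsClubIn (czOf z) ∧
  (∀ a, TRsrc Q z a → TRtgt z (eOf z a)) ∧
  (∀ a, ∀ b, TRsrc Q z a → TRsrc Q z b → eOf z a = eOf z b → a = b) ∧
  (∀ b, TRtgt z b → ∃ a, TRsrc Q z a ∧ eOf z a = b) ∧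
  (∀ a, ∀ b, TRsrc Q z a → TRsrc Q z b →
    (Q a b ↔ codedRel z.1 (eOf z a) (eOf z b)))}

lemma delta_TRsrc (Q : Omega1 → Omega1 → Prop) (a : Omega1) :
    D11 (tP tX) (fun z => TRsrc Q z a) :=
  d_exists (fun c => d_and (d_sndEq (cslot c) c) (d_const _))

lemma delta_TRtgt (a : Omega1) : D11 (tP tX) (fun z => TRtgt z a) :=
  d_exists (fun c => d_and (d_sndEq (cslot c) c) (d_sndProp (hslot a) (· = c)))

lemma delta_TRtgt_e (a : Omega1) : D11 (tP tX) (fun z => TRtgt z (eOf z a)) := by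
  refine d_exists (fun c => d_and (d_sndEq (cslot c) c) ?_)
  exact d_read (eslot a) (fun d => d_sndEq (hslot d) c)

lemma delta_DCI (Q : Omega1 → Omega1 → Prop) : IsDelta11 (tP tX) (DCI Q) := by
  refine d_and delta_club (d_and ?_ (d_and ?_ (d_and ?_ ?_)))
  · exact d_forall (fun a => d_imp (delta_TRsrc Q a) (delta_TRtgt_e a))
  · exact d_forall (fun a => d_forall (fun b => d_imp (delta_TRsrc Q a)
      (d_imp (delta_TRsrc Q b) (d_imp (d_sndProp2 (eslot a) (eslot b) (· = ·))
        (d_const _)))))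
  · exact d_forall (fun b => d_imp (delta_TRtgt b) (d_exists (fun a =>
      d_and (delta_TRsrc Q a) (d_sndProp (eslot a) (· = b)))))
  · exact d_forall (fun a => d_forall (fun b => d_imp (delta_TRsrc Q a)
      (d_imp (delta_TRsrc Q b) (d_iff (d_const _)
        (d_relGG (eslot a) (eslot b))))))

end Formulas

/-! ### semantic equivalences -/

section Semantics

/-- multi-role gluing. -/
def gmulti (h e : Omega1 → Omega1) (C : Set Omega1) : G :=
  roleGlue (fun j w =>
    if j = 1 then h w
    else if j = 2 then (if w ∈ C then w else shiftFn w)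
    else if j = 3 then e w
    else w)

lemma gmulti_h (h e : Omega1 → Omega1) (C : Set Omega1) (x : XX) :
    hOf (x, gmulti h e C) = h := by
  funext a
  show gmulti h e C (hslot a) = h a
  rw [gmulti, hslot, roleGlue_slot]
  simp

lemma gmulti_c (h e : Omega1 → Omega1) (C : Set Omega1) (x : XX) :
    czOf (x, gmulti h e C) = C := by
  ext c
  show gmulti h e C (cslot c) = c ↔ c ∈ C
  rw [gmulti, cslot, roleGlue_slot]
  simp only [Nat.succ_ne_self, if_neg (by decide : ¬ (2 = 1)), if_pos rfl]
  by_cases hc : c ∈ C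
  · simp [hc]
  · simp only [if_neg hc]
    exact ⟨fun h' => absurd h' (shiftFn_ne c), fun h' => absurd h' hc⟩

lemma gmulti_e (h e : Omega1 → Omega1) (C : Set Omega1) (x : XX) :
    eOf (x, gmulti h e C) = e := by
  funext a
  show gmulti h e C (eslot a) = e a
  rw [gmulti, eslot, roleGlue_slot]
  norm_num

/-- membership in `DCert` is exactly the height-function property. -/
lemma mem_DCert_iff {z : XX × G} : z ∈ DCert ↔ HFun (codedRel z.1) (hOf z) := by
  constructor
  · rintro ⟨h1, h2⟩ a
    exact ⟨h1 a, h2 a⟩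
  · intro hh
    exact ⟨fun a => (hh a).1, fun a => (hh a).2⟩

/-- a regular tree has all heights below `ω₁`. -/
lemma heights_lt_of_reg {r : Omega1 → Omega1 → Prop} (hr : IsRegularTree r) :
    ∀ b, treeHeight r b < omega1Ord := by
  intro b
  by_contra hge
  push_neg at hge
  have h0 := hr.toIsAleph1Tree.level_empty_of_ge _ hge
  have : b ∈ treeLevel r (treeHeight r b) := rfl
  rw [h0] at this
  exact notMem_empty b this

lemma predsBdd_of_reg {r : Omega1 → Omega1 → Prop} (hr : IsRegularTree r) :
    ∀ c, ∃ β, ∀ a, r a c → a < β := by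
  intro c
  have hfo := TreeFO.of_isTreeOrder hr.toIsAleph1Tree.toIsTreeOrder
  have hwf := wf_of_isTreeOrder hr.toIsAleph1Tree.toIsTreeOrder
  have hct := preds_countable_of_height_lt hfo hwf (heights_lt_of_reg hr c)
  rcases bounded_of_countable hct with ⟨β, hβ⟩
  exact ⟨β, fun a ha => hβ a ha⟩

/-- the conclusions hold for any height function of a regular tree. -/
lemma conc_of_reg {r : Omega1 → Omega1 → Prop} (hr : IsRegularTree r)
    {h : Omega1 → Omega1} (hh : HFun r h) :
    (∀ β, ∃ c, h c = β) ∧ (∀ β, ∃ bd, ∀ a, h a = β → a < bd) ∧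
    (∀ s β, h s < β → ∃ t, r s t ∧ h t = β) := by
  have hfo := TreeFO.of_isTreeOrder hr.toIsAleph1Tree.toIsTreeOrder
  have hts := hfun_heights hfo hh
  refine ⟨?_, ?_, ?_⟩
  · intro β
    rcases hr.toIsAleph1Tree.level_nonempty (ordOf β) (ordOf_lt_omega1 β) with ⟨c, hc⟩
    refine ⟨c, ordOf_inj ?_⟩
    rw [← hts c]
    exact hc
  · intro β
    have hsub : {a | h a = β} ⊆ treeLevel r (ordOf β) := by
      intro a ha
      show treeHeight r a = ordOf β
      rw [hts a, ha]
    have hct : {a | h a = β}.Countable :=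
      Set.Countable.mono hsub (hr.toIsAleph1Tree.level_countable (ordOf β))
    rcases bounded_of_countable hct with ⟨bd, hbd⟩
    exact ⟨bd, fun a ha => hbd a ha⟩
  · intro s β hs
    have h1 : treeHeight r s < ordOf β := by
      rw [hts s]
      exact ordOf_lt_iff.2 hs
    rcases hr.pruned s (ordOf β) h1 (ordOf_lt_omega1 β) with ⟨t, hrt, hht⟩
    refine ⟨t, hrt, ordOf_inj ?_⟩
    rw [← hts t]
    exact hht

/-- build a regular tree from the first-order data plus a height function. -/
lemma isRegular_of_hfun {r : Omega1 → Omega1 → Prop} (hfo : TreeFO r)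
    (hroot : ∃ rt, ∀ a, a = rt ∨ r rt a)
    (hbb : ∀ s, ∃ t₁, ∃ t₂, t₁ ≠ t₂ ∧ ImmSucc r s t₁ ∧ ImmSucc r s t₂)
    {h : Omega1 → Omega1} (hh : HFun r h)
    (hne : ∀ β, ∃ c, h c = β)
    (hbd : ∀ β, ∃ bd, ∀ a, h a = β → a < bd)
    (hpr : ∀ s β, h s < β → ∃ t, r s t ∧ h t = β) : IsRegularTree r := by
  have hwf : WellFounded r := wf_of_hfun (fun p a hpa => (hh a).1 p hpa)
  have hts := hfun_heights hfo hh
  have hto : IsTreeOrder r :=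
    ⟨hfo.trans, hfo.irrefl, hfo.trichot, pred_wellOrdered_of_wf hfo hwf⟩
  refine ⟨⟨hto, ?_, ?_, ?_⟩, hroot, hbb, ?_⟩
  · intro ξ
    by_cases hξ : ξ < omega1Ord
    · have heq : treeLevel r ξ ⊆ {a | h a = rep ξ hξ} := by
        intro a ha
        have : ordOf (h a) = ξ := by rw [← hts a]; exact ha
        show h a = rep ξ hξ
        apply ordOf_inj
        rw [this, ordOf_rep]
      rcases hbd (rep ξ hξ) with ⟨bd, hbd'⟩
      exact countable_of_bounded (fun a ha => hbd' a (heq ha))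
    · have : treeLevel r ξ = ∅ := by
        ext a
        simp only [mem_empty_iff_false, iff_false]
        intro ha
        have : treeHeight r a = ξ := ha
        rw [hts a] at this
        exact hξ (this ▸ ordOf_lt_omega1 (h a))
      rw [this]
      exact countable_empty
  · intro ξ hξ
    rcases hne (rep ξ hξ) with ⟨c, hc⟩
    refine ⟨c, ?_⟩
    show treeHeight r c = ξ
    rw [hts c, hc, ordOf_rep]
  · intro ξ hξ
    ext a
    simp only [mem_empty_iff_false, iff_false]
    intro ha
    have : treeHeight r a = ξ := ha
    rw [hts a] at this
    exact absurd (this ▸ ordOf_lt_omega1 (h a)) (not_lt.2 hξ)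
  · intro s γ hsγ hγ
    rcases hpr s (rep γ hγ) (by rw [← ordOf_lt_iff, ordOf_rep, ← hts s]; exact hsγ) with
      ⟨t, hrt, hht⟩
    refine ⟨t, hrt, ?_⟩
    rw [hts t, hht, ordOf_rep]

/-- the first-order part of `SFO`, semantically. -/
lemma mem_SFO_of_reg {x : XX} (hr : IsRegularTreeCode x) : x ∈ SFO := by
  have hto := hr.toIsAleph1Tree.toIsTreeOrder
  refine ⟨hto.trans, hto.irrefl, hto.pred_trichot, hr.rooted, ?_, predsBdd_of_reg hr⟩
  intro s
  rcases hr.binBranching s with ⟨t₁, t₂, hne, h1, h2⟩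
  exact ⟨t₁, t₂, hne, ⟨h1.1, h1.2⟩, ⟨h2.1, h2.2⟩⟩

/-- main equivalence, `Π`-form. -/
lemma reg_iff_pi (x : XX) :
    IsRegularTreeCode x ↔
      (x ∈ SFO ∧ ∀ g : G, (x, g) ∈ (DDescᶜ ∩ (DCertᶜ ∪ DConc))) := by
  constructor
  · intro hr
    refine ⟨mem_SFO_of_reg hr, fun g => ⟨?_, ?_⟩⟩
    · intro hdesc
      have hwf := wf_of_isTreeOrder hr.toIsAleph1Tree.toIsTreeOrder
      rcases hwf.has_min (Set.range (fOf (x, g))) ⟨fOf (x, g) 0, 0, rfl⟩ with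
        ⟨m, ⟨n, hn⟩, hmin⟩
      exact hmin (fOf (x, g) (n + 1)) ⟨n + 1, rfl⟩ (hn ▸ hdesc n)
    · by_cases hcert : (x, g) ∈ DCert
      · refine Or.inr ?_
        have hh := mem_DCert_iff.1 hcert
        rcases conc_of_reg hr hh with ⟨h1, h2, h3⟩
        exact ⟨h1, h2, h3⟩
      · exact Or.inl hcert
  · rintro ⟨hfo', hall⟩
    obtain ⟨htr, hirr, htri, hroot, hbb, hpb⟩ := hfo'
    have hfo : TreeFO (codedRel x) := ⟨htr, hirr, htri⟩
    -- well-foundedness from the absence of descending sequences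
    have hwf : WellFounded (codedRel x) := by
      rw [WellFounded.wellFounded_iff_has_min]
      intro S hS
      by_contra hno
      push_neg at hno
      have hstep : ∀ a ∈ S, ∃ b ∈ S, codedRel x b a := by
        intro a ha
        rcases hno a ha with ⟨b, hb, hba⟩
        exact ⟨b, hb, hba⟩
      rcases hS with ⟨a₀, ha₀⟩
      -- build a descending sequence
      have hex : ∃ f : ℕ → Omega1, (∀ n, f n ∈ S) ∧ ∀ n, codedRel x (f (n + 1)) (f n) := by
        choose nxt hnxt1 hnxt2 using hstep
        let F : ℕ → {a // a ∈ S} → {a // a ∈ S} := fun _ p => ⟨nxt p.1 p.2, hnxt1 p.1 p.2⟩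
        let seq : ℕ → {a // a ∈ S} :=
          fun n => Nat.rec (motive := fun _ => {a // a ∈ S}) ⟨a₀, ha₀⟩ F n
        refine ⟨fun n => (seq n).1, fun n => (seq n).2, fun n => ?_⟩
        show codedRel x (seq (n + 1)).1 (seq n).1
        have hstep' : seq (n + 1) = F n (seq n) := rfl
        rw [hstep']
        exact hnxt2 _ _
      rcases hex with ⟨f, hfS, hf⟩
      set g' : G := roleGlue (fun j w =>
        if j = 4 then (if h : ∃ n, natEmb n = w then f h.choose else w) else w) with hg'
      have hdesc : (x, g') ∈ DDesc := by
        intro n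
        have hv : ∀ m : ℕ, fOf (x, g') m = f m := by
          intro m
          show g' (fslot m) = f m
          rw [hg', fslot, roleGlue_slot]
          have h : ∃ n', natEmb n' = natEmb m := ⟨m, rfl⟩
          have hcm : h.choose = m := natEmb_inj h.choose_spec
          rw [if_pos rfl, dif_pos h, hcm]
        show codedRel x (fOf (x, g') (n + 1)) (fOf (x, g') n)
        rw [hv (n + 1), hv n]
        exact hf n
      exact (hall g').1 hdesc
    -- heights are < ω₁
    have hlt : ∀ b, treeHeight (codedRel x) b < omega1Ord := by
      intro b
      rcases hpb b with ⟨β, hβ⟩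
      exact treeHeight_lt_omega1_of_bounded hfo hwf hβ
    -- get a height function
    rcases hfun_exists hfo hwf hlt with ⟨h, hh, -⟩
    -- feed the certificate into the hypothesis
    set g₀ : G := gmulti h id univ with hg₀
    have hcert : (x, g₀) ∈ DCert := by
      rw [mem_DCert_iff]
      have : hOf (x, g₀) = h := gmulti_h h id univ x
      rw [this]
      exact hh
    have hconc : (x, g₀) ∈ DConc := by
      rcases (hall g₀).2 with hc | hc
      · exact absurd hcert hc
      · exact hc
    obtain ⟨h1, h2, h3⟩ := hconc
    have hhof : hOf (x, g₀) = h := gmulti_h h id univ x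
    rw [hhof] at h1 h2 h3
    exact isRegular_of_hfun hfo hroot hbb hh h1 h2 h3

/-- main equivalence, `Σ`-form. -/
lemma reg_iff_sigma (x : XX) :
    IsRegularTreeCode x ↔ (x ∈ SFO ∧ ∃ g : G, (x, g) ∈ (DCert ∩ DConc)) := by
  constructor
  · intro hr
    refine ⟨mem_SFO_of_reg hr, ?_⟩
    have hfo := TreeFO.of_isTreeOrder hr.toIsAleph1Tree.toIsTreeOrder
    have hwf := wf_of_isTreeOrder hr.toIsAleph1Tree.toIsTreeOrder
    rcases hfun_exists hfo hwf (heights_lt_of_reg hr) with ⟨h, hh, -⟩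
    refine ⟨gmulti h id univ, ?_, ?_⟩
    · rw [mem_DCert_iff, show hOf (x, gmulti h id univ) = h from gmulti_h h id univ x]
      exact hh
    · rcases conc_of_reg hr hh with ⟨h1, h2, h3⟩
      refine ⟨?_, ?_, ?_⟩ <;>
        rw [show hOf (x, gmulti h id univ) = h from gmulti_h h id univ x]
      · exact h1
      · exact h2
      · exact h3
  · rintro ⟨hfo', g, hcert, hconc⟩
    obtain ⟨htr, hirr, htri, hroot, hbb, hpb⟩ := hfo'
    have hfo : TreeFO (codedRel x) := ⟨htr, hirr, htri⟩
    have hh := mem_DCert_iff.1 hcert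
    obtain ⟨h1, h2, h3⟩ := hconc
    exact isRegular_of_hfun hfo hroot hbb hh h1 h2 h3

end Semantics

/-! ### chain, antichain, decomposition, embedding codings -/

section Semantics2

lemma chain_iff (x : XX) :
    (∀ c : Set Omega1, IsChainIn (codedRel x) c → c.Countable) ↔
      ∀ g : G, (x, g) ∉ DChain := by
  constructor
  · intro hc g hg
    obtain ⟨hch, hub⟩ := hg
    have hchain : IsChainIn (codedRel x) (czOf (x, g)) := fun a ha b hb => hch a b ha hb
    rcases bounded_of_countable (hc _ hchain) with ⟨β, hβ⟩
    rcases hub β with ⟨a, haC, hβa⟩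
    exact absurd (hβ a haC) (not_lt.2 hβa.le)
  · intro hg c hch
    by_contra hct
    have hub : ∀ β, ∃ a ∈ c, β < a := by
      intro β
      by_contra hb
      push_neg at hb
      rcases exists_gt_omega1 β with ⟨β', hββ'⟩
      exact hct (countable_of_bounded (β := β')
        (fun a ha => lt_of_le_of_lt (hb a ha) hββ'))
    refine hg (gmulti id id c) ⟨?_, ?_⟩
    · intro a b ha hb
      rw [gmulti_c] at ha hb
      exact hch a ha b hb
    · intro β
      rcases hub β with ⟨a, hac, hβa⟩
      exact ⟨a, by rw [gmulti_c]; exact hac, hβa⟩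

lemma anti_iff (x : XX) :
    (∀ c : Set Omega1, IsAntichainIn (codedRel x) c → c.Countable) ↔
      ∀ g : G, (x, g) ∉ DAnti := by
  constructor
  · intro hc g hg
    obtain ⟨hch, hub⟩ := hg
    have hanti : IsAntichainIn (codedRel x) (czOf (x, g)) :=
      fun a ha b hb hne => hch a b ha hb hne
    rcases bounded_of_countable (hc _ hanti) with ⟨β, hβ⟩
    rcases hub β with ⟨a, haC, hβa⟩
    exact absurd (hβ a haC) (not_lt.2 hβa.le)
  · intro hg c hch
    by_contra hct
    have hub : ∀ β, ∃ a ∈ c, β < a := by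
      intro β
      by_contra hb
      push_neg at hb
      rcases exists_gt_omega1 β with ⟨β', hββ'⟩
      exact hct (countable_of_bounded (β := β')
        (fun a ha => lt_of_le_of_lt (hb a ha) hββ'))
    refine hg (gmulti id id c) ⟨?_, ?_⟩
    · intro a b ha hb hne
      rw [gmulti_c] at ha hb
      exact hch a ha b hb hne
    · intro β
      rcases hub β with ⟨a, hac, hβa⟩
      exact ⟨a, by rw [gmulti_c]; exact hac, hβa⟩

/-- gluing for antichain decompositions. -/
def gdecomp (A : ℕ → Set Omega1) : G :=
  roleGlue (fun j w =>
    if j = 5 then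
      (if h : ∃ n, natEmb n = (pairEquiv.symm w).2 then
        (if (pairEquiv.symm w).1 ∈ A h.choose then (pairEquiv.symm w).1
          else shiftFn (pairEquiv.symm w).1)
        else w)
    else w)

lemma gdecomp_az (A : ℕ → Set Omega1) (x : XX) (n : ℕ) :
    azOf (x, gdecomp A) n = A n := by
  ext a
  show gdecomp A (aslot n a) = a ↔ a ∈ A n
  rw [gdecomp, aslot, roleGlue_slot, if_pos rfl]
  have hsymm : pairEquiv.symm (mfn (natEmb n) a) = (a, natEmb n) := by
    rw [mfn]
    exact pairEquiv.symm_apply_apply _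
  simp only [hsymm]
  have h : ∃ n', natEmb n' = natEmb n := ⟨n, rfl⟩
  rw [dif_pos h, natEmb_inj h.choose_spec]
  by_cases hA : a ∈ A n
  · simp [hA]
  · simp only [if_neg hA]
    exact ⟨fun h' => absurd h' (shiftFn_ne a), fun h' => absurd h' hA⟩

lemma decomp_iff (x : XX) :
    (∃ A : ℕ → Set Omega1, (∀ n, IsAntichainIn (codedRel x) (A n)) ∧
      (⋃ n, A n) = Set.univ) ↔ ∃ g : G, (x, g) ∈ DDecomp := by
  constructor
  · rintro ⟨A, hA, hcov⟩
    refine ⟨gdecomp A, ?_, ?_⟩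
    · intro n a b ha hb hne
      rw [show azOf (x, gdecomp A) n = A n from gdecomp_az A x n] at ha hb
      exact hA n a ha b hb hne
    · intro a
      have : a ∈ ⋃ n, A n := by rw [hcov]; trivial
      rcases mem_iUnion.1 this with ⟨n, hn⟩
      exact ⟨n, by rw [show azOf (x, gdecomp A) n = A n from gdecomp_az A x n]; exact hn⟩
  · rintro ⟨g, h1, h2⟩
    refine ⟨fun n => azOf (x, g) n, fun n a ha b hb hne => h1 n a b ha hb hne, ?_⟩
    ext a
    simp only [mem_iUnion, mem_univ, iff_true]
    exact h2 a

/-- gluing for derived-tree embeddings. -/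
def gembed (n : ℕ) (C : Set Omega1) (e : (Fin n → Omega1) → Omega1) : G :=
  roleGlue (fun j w =>
    if j = 2 then (if w ∈ C then w else shiftFn w)
    else if j = 3 then
      (if h : ∃ f : Fin n → Omega1, tupEnc n f = w then e h.choose else w)
    else w)

lemma gembed_c (n : ℕ) (C : Set Omega1) (e : (Fin n → Omega1) → Omega1) (x : XX) :
    czOf (x, gembed n C e) = C := by
  ext c
  show gembed n C e (cslot c) = c ↔ c ∈ C
  rw [gembed, cslot, roleGlue_slot, if_pos rfl]
  by_cases hc : c ∈ C
  · simp [hc]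
  · simp only [if_neg hc]
    exact ⟨fun h' => absurd h' (shiftFn_ne c), fun h' => absurd h' hc⟩

lemma gembed_e (n : ℕ) (C : Set Omega1) (e : (Fin n → Omega1) → Omega1) (x : XX)
    (f : Fin n → Omega1) : eOf (x, gembed n C e) (tupEnc n f) = e f := by
  show gembed n C e (eslot (tupEnc n f)) = e f
  rw [gembed, eslot, roleGlue_slot, if_neg (by decide : ¬ (3 = 2)), if_pos rfl]
  have h : ∃ f' : Fin n → Omega1, tupEnc n f' = tupEnc n f := ⟨f, rfl⟩
  rw [dif_pos h, tupEnc_inj n h.choose_spec]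

lemma demb_iff (R : Omega1 → Omega1 → Prop) (n : ℕ) (s : Fin n → Omega1) (x : XX) :
    DerivedClubEmbeds R s (codedRel x) ↔ ∃ g : G, (x, g) ∈ DEmb R n s := by
  constructor
  · rintro ⟨C, hclub, e, hinj, hpres⟩
    refine ⟨gembed n C e, ?_, ?_, ?_⟩
    · rw [show czOf (x, gembed n C e) = C from gembed_c n C e x]
      exact hclub
    · intro f f' hf hf' heq
      rw [show czOf (x, gembed n C e) = C from gembed_c n C e x] at hf hf'
      refine hinj hf hf' ?_
      rw [← gembed_e n C e x f, ← gembed_e n C e x f']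
      exact heq
    · intro f f' hf hf' hlt
      rw [show czOf (x, gembed n C e) = C from gembed_c n C e x] at hf hf'
      show codedRel x (eOf (x, gembed n C e) (tupEnc n f))
        (eOf (x, gembed n C e) (tupEnc n f'))
      rw [gembed_e n C e x f, gembed_e n C e x f']
      exact hpres f hf f' hf' hlt
  · rintro ⟨g, hclub, hinj, hpres⟩
    exact ⟨czOf (x, g), hclub, fun f => eOf (x, g) (tupEnc n f),
      fun f hf f' hf' heq => hinj f f' hf hf' heq,
      fun f hf f' hf' hlt => hpres f f' hf hf' hlt⟩

/-- club-isomorphism coding, given a regular code. -/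
lemma dci_iff (Q : Omega1 → Omega1 → Prop) (x : XX) (hr : IsRegularTreeCode x) :
    ClubIso Q (codedRel x) ↔ ∃ g : G, (x, g) ∈ DCert ∩ DCI Q := by
  have hfo := TreeFO.of_isTreeOrder hr.toIsAleph1Tree.toIsTreeOrder
  have hwf := wf_of_isTreeOrder hr.toIsAleph1Tree.toIsTreeOrder
  constructor
  · rintro ⟨C, hclub, e, hbij, hpres⟩
    rcases hfun_exists hfo hwf (heights_lt_of_reg hr) with ⟨h, hh, -⟩
    set g := gmulti h e C with hg
    have hcz : czOf (x, g) = C := gmulti_c h e C x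
    have hhof : hOf (x, g) = h := gmulti_h h e C x
    have heof : eOf (x, g) = e := gmulti_e h e C x
    have hts := hfun_heights hfo hh
    have htgt : ∀ b, TRtgt (x, g) b ↔ b ∈ treeRestrictNodes (codedRel x) C := by
      intro b
      constructor
      · rintro ⟨c, hcC, hbc⟩
        rw [hcz] at hcC
        have hbc' : h b = c := by rw [← hhof]; exact hbc
        exact ⟨c, hcC, by rw [hts b, hbc']⟩
      · rintro ⟨c, hcC, hbc⟩
        refine ⟨c, by rw [hcz]; exact hcC, ?_⟩
        show hOf (x, g) b = c
        rw [hhof]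
        apply ordOf_inj
        rw [← hts b]
        exact hbc
    have hsrc : ∀ a, TRsrc Q (x, g) a ↔ a ∈ treeRestrictNodes Q C := by
      intro a
      constructor
      · rintro ⟨c, hcC, hac⟩
        exact ⟨c, by rwa [hcz] at hcC, hac⟩
      · rintro ⟨c, hcC, hac⟩
        exact ⟨c, by rw [hcz]; exact hcC, hac⟩
    refine ⟨g, ?_, ?_⟩
    · rw [mem_DCert_iff, hhof]
      exact hh
    · refine ⟨by rw [hcz]; exact hclub, ?_, ?_, ?_, ?_⟩
      · intro a hsa
        have : e a ∈ treeRestrictNodes (codedRel x) C := hbij.mapsTo ((hsrc a).1 hsa)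
        refine (htgt (eOf (x, g) a)).2 ?_
        rw [show eOf (x, g) a = e a from congrFun heof a]
        exact this
      · intro a b hsa hsb heq
        refine hbij.injOn ((hsrc a).1 hsa) ((hsrc b).1 hsb) ?_
        rw [← congrFun heof a, ← congrFun heof b]
        exact heq
      · intro b htgtb
        rcases hbij.surjOn ((htgt b).1 htgtb) with ⟨a, haS, hae⟩
        exact ⟨a, (hsrc a).2 haS, by rw [congrFun heof a]; exact hae⟩
      · intro a b hsa hsb
        have := hpres a ((hsrc a).1 hsa) b ((hsrc b).1 hsb)
        rw [congrFun heof a, congrFun heof b]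
        exact this
  · rintro ⟨g, hcert, hci⟩
    obtain ⟨hclub, hmap, hinj, hsurj, hpres⟩ := hci
    have hts := hfun_heights hfo (mem_DCert_iff.1 hcert)
    have htgt : ∀ b, TRtgt (x, g) b ↔
        b ∈ treeRestrictNodes (codedRel x) (czOf (x, g)) := by
      intro b
      constructor
      · rintro ⟨c, hcC, hbc⟩
        exact ⟨c, hcC, by rw [hts b, hbc]⟩
      · rintro ⟨c, hcC, hbc⟩
        refine ⟨c, hcC, ?_⟩
        apply ordOf_inj
        rw [← hts b]
        exact hbc
    refine ⟨czOf (x, g), hclub, eOf (x, g), ⟨?_, ?_, ?_⟩, ?_⟩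
    · intro a hsa
      exact (htgt _).1 (hmap a hsa)
    · intro a hsa b hsb heq
      exact hinj a b hsa hsb heq
    · intro b htgtb
      rcases hsurj b ((htgt b).2 htgtb) with ⟨a, hsa, hae⟩
      exact ⟨a, hsa, hae⟩
    · intro a hsa b hsb
      exact hpres a b hsa hsb

end Semantics2

/-! ### the Suslin transfer lemma -/

section Transfer

lemma club_not_countable {C : Set Omega1} (hclub : IsClubIn C) : ¬ C.Countable := by
  intro hct
  rcases bounded_of_countable hct with ⟨β, hβ⟩
  rcases hclub.1 β with ⟨b, hbC, hβb⟩
  exact absurd (hβ b hbC) (not_lt.2 hβb.le)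

lemma countable_Iic (β : Omega1) : {a : Omega1 | a ≤ β}.Countable := by
  rcases exists_gt_omega1 β with ⟨β', hββ'⟩
  exact countable_of_bounded (β := β') (fun a ha => lt_of_le_of_lt ha hββ')

/-- a club-isomorphic copy of a Suslin tree is Suslin. -/
lemma suslin_transfer {Q r : Omega1 → Omega1 → Prop} (hQ : IsSuslinTree Q)
    (hr : IsRegularTree r) (hci : ClubIso Q r) : IsSuslinTree r := by
  obtain ⟨C, hclub, e, hbij, hpres⟩ := hci
  have hfo := TreeFO.of_isTreeOrder hr.toIsAleph1Tree.toIsTreeOrder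
  have hwf := wf_of_isTreeOrder hr.toIsAleph1Tree.toIsTreeOrder
  have hlt := heights_lt_of_reg hr
  -- chains
  have hchains : ∀ c : Set Omega1, IsChainIn r c → c.Countable := by
    intro c hcc
    by_contra hct
    -- heights along the chain are unbounded
    have hUnbHt : ∀ β : Omega1, ∃ b ∈ c, ordOf β < treeHeight r b := by
      intro β
      by_contra hno
      push_neg at hno
      set φ : Omega1 → Omega1 := fun b => rep (treeHeight r b) (hlt b) with hφ
      have hφo : ∀ b, ordOf (φ b) = treeHeight r b := by
        intro b
        rw [hφ]
        exact ordOf_rep _ _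
      refine hct (Set.countable_of_injective_of_countable_image (f := φ) ?_ ?_)
      · intro b hb b' hb' heq
        have hhe : treeHeight r b = treeHeight r b' := by
          rw [← hφo b, ← hφo b', heq]
        rcases hcc b hb b' hb' with h | h | h
        · exact h
        · have hl := treeHeight_lt_of_pred hfo hwf h
          rw [hhe] at hl
          exact absurd hl (lt_irrefl _)
        · have hl := treeHeight_lt_of_pred hfo hwf h
          rw [hhe] at hl
          exact absurd hl (lt_irrefl _)
      · refine Set.Countable.mono ?_ (countable_Iic β)
        rintro y ⟨b, hb, rfl⟩
        show φ b ≤ β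
        rw [← ordOf_le_iff, hφo b]
        exact hno b hb
    -- pick nodes of the chain at club heights
    have hpick : ∀ γ ∈ C, ∃ a, treeHeight r a = ordOf γ ∧ ∃ b ∈ c, r a b := by
      intro γ hγ
      rcases hUnbHt γ with ⟨b, hb, hγb⟩
      rcases exists_pred_at hfo hwf hγb with ⟨a, hab, ha⟩
      exact ⟨a, ha, b, hb, hab⟩
    choose! aN haN1 haN2 using hpick
    set S := aN '' C with hS
    have hinjS : Set.InjOn aN C := by
      intro γ hγ γ' hγ' heq
      apply ordOf_inj
      rw [← haN1 γ hγ, ← haN1 γ' hγ', heq]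
    have hSunc : ¬ S.Countable := by
      intro hSc
      exact club_not_countable hclub
        (Set.countable_of_injective_of_countable_image hinjS hSc)
    have hStgt : S ⊆ treeRestrictNodes r C := by
      rintro a ⟨γ, hγ, rfl⟩
      exact ⟨γ, hγ, haN1 γ hγ⟩
    have hSchain : ∀ a ∈ S, ∀ a' ∈ S, a = a' ∨ r a a' ∨ r a' a := by
      rintro a ⟨γ, hγ, rfl⟩ a' ⟨γ', hγ', rfl⟩
      rcases haN2 γ hγ with ⟨b, hb, hab⟩
      rcases haN2 γ' hγ' with ⟨b', hb', hab'⟩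
      rcases hcc b hb b' hb' with hbe | hbb | hbb
      · subst hbe
        rcases hfo.trichot _ _ _ hab hab' with h | h | h
        · exact Or.inr (Or.inl h)
        · exact Or.inl h
        · exact Or.inr (Or.inr h)
      · have hab2 : r (aN γ) b' := hfo.trans _ _ _ hab hbb
        rcases hfo.trichot _ _ _ hab2 hab' with h | h | h
        · exact Or.inr (Or.inl h)
        · exact Or.inl h
        · exact Or.inr (Or.inr h)
      · have hab2 : r (aN γ') b := hfo.trans _ _ _ hab' hbb
        rcases hfo.trichot _ _ _ hab hab2 with h | h | h
        · exact Or.inr (Or.inl h)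
        · exact Or.inl h
        · exact Or.inr (Or.inr h)
    -- pull back through e
    have hpick' : ∀ a ∈ S, ∃ p ∈ treeRestrictNodes Q C, e p = a := by
      intro a ha
      rcases hbij.surjOn (hStgt ha) with ⟨p, hp, hpe⟩
      exact ⟨p, hp, hpe⟩
    choose! pN hpN1 hpN2 using hpick'
    set S' := pN '' S with hS'
    have hchQ : IsChainIn Q S' := by
      rintro p ⟨a, ha, rfl⟩ p' ⟨a', ha', rfl⟩
      rcases hSchain a ha a' ha' with h | h | h
      · left
        exact hbij.injOn (hpN1 a ha) (hpN1 a' ha')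
          (by rw [hpN2 a ha, hpN2 a' ha', h])
      · right; left
        refine (hpres _ (hpN1 a ha) _ (hpN1 a' ha')).2 ?_
        rw [hpN2 a ha, hpN2 a' ha']
        exact h
      · right; right
        refine (hpres _ (hpN1 a' ha') _ (hpN1 a ha)).2 ?_
        rw [hpN2 a ha, hpN2 a' ha']
        exact h
    have hS'c := hQ.1.2 S' hchQ
    have : S.Countable := by
      have him : S = e '' S' := by
        ext a
        constructor
        · intro ha
          exact ⟨pN a, ⟨a, ha, rfl⟩, hpN2 a ha⟩
        · rintro ⟨p, ⟨a', ha', rfl⟩, rfl⟩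
          rw [hpN2 a' ha']
          exact ha'
      rw [him]
      exact Set.Countable.image hS'c e
    exact hSunc this
  -- antichains
  have hantis : ∀ c : Set Omega1, IsAntichainIn r c → c.Countable := by
    intro c hcc
    by_contra hct
    have hpick : ∀ a ∈ c, ∃ t, r a t ∧ ∃ γ ∈ C, treeHeight r t = ordOf γ := by
      intro a _
      rcases hclub.1 (rep (treeHeight r a) (hlt a)) with ⟨γ, hγC, hγgt⟩
      have h1 : treeHeight r a < ordOf γ := by
        rw [← ordOf_rep (treeHeight r a) (hlt a)]
        exact ordOf_lt_iff.2 hγgt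
      rcases hr.pruned a (ordOf γ) h1 (ordOf_lt_omega1 γ) with ⟨t, hat, hth⟩
      exact ⟨t, hat, γ, hγC, hth⟩
    choose! tN ht1 ht2 using hpick
    have hinjT : Set.InjOn tN c := by
      intro a ha a' ha' heq
      by_contra hne
      have h1 : r a (tN a') := heq ▸ ht1 a ha
      rcases hfo.trichot _ _ _ h1 (ht1 a' ha') with h | h | h
      · exact (hcc a ha a' ha' hne).1 h
      · exact hne h
      · exact (hcc a ha a' ha' hne).2 h
    set T := tN '' c with hT
    have hTunc : ¬ T.Countable := by
      intro hTc
      exact hct (Set.countable_of_injective_of_countable_image hinjT hTc)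
    have hTtgt : T ⊆ treeRestrictNodes r C := by
      rintro t ⟨a, ha, rfl⟩
      exact ht2 a ha
    have hTanti : ∀ t ∈ T, ∀ t' ∈ T, t ≠ t' → ¬ r t t' ∧ ¬ r t' t := by
      rintro t ⟨a, ha, rfl⟩ t' ⟨a', ha', rfl⟩ hne
      have hane : a ≠ a' := by
        intro h
        exact hne (by rw [h])
      constructor
      · intro hr1
        have h1 : r a (tN a') := hfo.trans _ _ _ (ht1 a ha) hr1
        rcases hfo.trichot _ _ _ h1 (ht1 a' ha') with h | h | h
        · exact (hcc a ha a' ha' hane).1 h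
        · exact hane h
        · exact (hcc a ha a' ha' hane).2 h
      · intro hr1
        have h1 : r a' (tN a) := hfo.trans _ _ _ (ht1 a' ha') hr1
        rcases hfo.trichot _ _ _ (ht1 a ha) h1 with h | h | h
        · exact (hcc a ha a' ha' hane).1 h
        · exact hane h

        · exact (hcc a ha a' ha' hane).2 h
    -- pull back through e
    have hpick' : ∀ t ∈ T, ∃ p ∈ treeRestrictNodes Q C, e p = t := by
      intro t ht
      rcases hbij.surjOn (hTtgt ht) with ⟨p, hp, hpe⟩
      exact ⟨p, hp, hpe⟩
    choose! pN hpN1 hpN2 using hpick'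
    set T' := pN '' T with hT'
    have hatQ : IsAntichainIn Q T' := by
      rintro p ⟨t, ht, rfl⟩ p' ⟨t', ht', rfl⟩ hne
      have htne : t ≠ t' := by
        intro h
        exact hne (by rw [h])
      constructor
      · intro hq
        exact (hTanti t ht t' ht' htne).1 (by
          have := (hpres _ (hpN1 t ht) _ (hpN1 t' ht')).1 hq
          rwa [hpN2 t ht, hpN2 t' ht'] at this)
      · intro hq
        exact (hTanti t ht t' ht' htne).2 (by
          have := (hpres _ (hpN1 t' ht') _ (hpN1 t ht)).1 hq
          rwa [hpN2 t ht, hpN2 t' ht'] at this)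
    have hT'c := hQ.2 T' hatQ
    have : T.Countable := by
      have him : T = e '' T' := by
        ext t
        constructor
        · intro ht
          exact ⟨pN t, ⟨t, ht, rfl⟩, hpN2 t ht⟩
        · rintro ⟨p, ⟨t', ht', rfl⟩, rfl⟩
          rw [hpN2 t' ht']
          exact ht'
      rw [him]
      exact Set.Countable.image hT'c e
    exact hTunc this
  exact ⟨⟨hr.toIsAleph1Tree, hchains⟩, hantis⟩

end Transfer

/-! ### assembly -/

section Assembly

def MPi : Set (XX × G) := DDescᶜ ∩ (DCertᶜ ∪ DConc)
def MSig : Set (XX × G) := DCert ∩ DConc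
def RegSet : Set XX := {x | IsRegularTreeCode x}

lemma regSet_eq_pi : RegSet = SFO ∩ {x | ∀ g : G, (x, g) ∈ MPi} := by
  ext x
  exact reg_iff_pi x

lemma regSet_eq_sig : RegSet = SFO ∩ {x | ∃ g : G, (x, g) ∈ MSig} := by
  ext x
  exact reg_iff_sigma x

lemma pi_RegSet : IsPi11 tX RegSet := by
  rw [regSet_eq_pi]
  refine pi_inter delta_SFO.1 (pi_forall ?_)
  exact pi_inter delta_DDesc.2 (pi_union delta_DCert.2 delta_DConc.1)

lemma pi_RegSet_compl : IsPi11 tX RegSetᶜ := by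
  rw [regSet_eq_sig, compl_inter]
  refine pi_union delta_SFO.2 ?_
  have heq : {x : XX | ∃ g : G, (x, g) ∈ MSig}ᶜ = {x | ∀ g : G, (x, g) ∈ MSigᶜ} := by
    ext x
    simp [not_exists]
  rw [heq]
  exact pi_forall (delta_inter delta_DCert delta_DConc).2

def AronSet : Set XX := {x | ∀ c : Set Omega1, IsChainIn (codedRel x) c → c.Countable}
def AntiSet : Set XX := {x | ∀ c : Set Omega1, IsAntichainIn (codedRel x) c → c.Countable}

lemma pi_AronSet : IsPi11 tX AronSet := by
  have heq : AronSet = {x | ∀ g : G, (x, g) ∈ DChainᶜ} := by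
    ext x
    exact chain_iff x
  rw [heq]
  exact pi_forall delta_DChain.2

lemma pi_AntiSet : IsPi11 tX AntiSet := by
  have heq : AntiSet = {x | ∀ g : G, (x, g) ∈ DAntiᶜ} := by
    ext x
    exact anti_iff x
  rw [heq]
  exact pi_forall delta_DAnti.2

def DecompS : Set XX := {x | ∃ A : ℕ → Set Omega1,
  (∀ n, IsAntichainIn (codedRel x) (A n)) ∧ (⋃ n, A n) = Set.univ}

lemma pi_DecompS_compl : IsPi11 tX DecompSᶜ := by
  have heq : DecompSᶜ = {x | ∀ g : G, (x, g) ∈ DDecompᶜ} := by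
    ext x
    simp only [DecompS, mem_compl_iff, mem_setOf_eq]
    rw [decomp_iff x]
    simp [not_exists]
  rw [heq]
  exact pi_forall delta_DDecomp.2

def EmbedS (R : Omega1 → Omega1 → Prop) : Set XX :=
  {x | ∃ n : ℕ, 0 < n ∧ ∃ s : Fin n → Omega1, IsDerivedBase R s ∧
    DerivedClubEmbeds R s (codedRel x)}

lemma pi_EmbedS_compl (R : Omega1 → Omega1 → Prop) : IsPi11 tX (EmbedS R)ᶜ := by
  have heq : (EmbedS R)ᶜ = ⋂ n : ℕ, ⋂ s : Fin n → Omega1,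
      ({x : XX | 0 < n ∧ IsDerivedBase R s}ᶜ ∪
        {x : XX | ∀ g : G, (x, g) ∈ (DEmb R n s)ᶜ}) := by
    ext x
    simp only [EmbedS, mem_compl_iff, mem_setOf_eq, mem_iInter, mem_union, not_exists]
    constructor
    · intro hno n s
      by_cases hc : 0 < n ∧ IsDerivedBase R s
      · right
        intro g hg
        exact hno n ⟨hc.1, s, hc.2, (demb_iff R n s x).2 ⟨g, hg⟩⟩
      · exact Or.inl hc
    · rintro hall n ⟨hn, s, hbase, hdce⟩
      rcases hall n s with hc | hc
      · exact hc ⟨hn, hbase⟩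
      · rcases (demb_iff R n s x).1 hdce with ⟨g, hg⟩
        exact hc g hg
  rw [heq]
  refine pi_iInter' natEmb natEmb_inj (fun n => ?_)
  refine pi_iInter' (tupEnc n) (tupEnc_inj n) (fun s => ?_)
  exact pi_union (delta_const (0 < n ∧ IsDerivedBase R s)).2
    (pi_forall (delta_DEmb R n s).2)

/-- the two target sets. -/
def SAS : Set XX := {x | IsRegularTreeCode x ∧ IsSpecialAronszajnTree (codedRel x)}
def SusS : Set XX := {x | IsRegularTreeCode x ∧ IsSuslinTree (codedRel x)}

lemma sas_eq_sig : SAS = RegSet ∩ DecompS := by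
  ext x
  constructor
  · rintro ⟨hreg, hsp⟩
    exact ⟨hreg, hsp.2⟩
  · rintro ⟨hreg, A, hA, hcov⟩
    refine ⟨hreg, ⟨hreg.toIsAleph1Tree, ?_⟩, A, hA, hcov⟩
    intro c hch
    have hsub : c ⊆ ⋃ n, (c ∩ A n) := by
      intro a ha
      have : a ∈ ⋃ n, A n := by rw [hcov]; trivial
      rcases mem_iUnion.1 this with ⟨n, hn⟩
      exact mem_iUnion.2 ⟨n, ha, hn⟩
    refine Set.Countable.mono hsub (Set.countable_iUnion (fun n => ?_))
    refine Set.Subsingleton.countable ?_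
    intro a ha b hb
    by_contra hne
    rcases hch a ha.1 b hb.1 with h | h | h
    · exact hne h
    · exact (hA n a ha.2 b hb.2 hne).1 h
    · exact (hA n a ha.2 b hb.2 hne).2 h

lemma sas_eq_pi {R : Omega1 → Omega1 → Prop} (hRiff : ∀ x : XX,
    IsRegularTreeCode x → IsAronszajnTree (codedRel x) →
      (IsSpecialAronszajnTree (codedRel x) ↔
        ¬ ∃ n : ℕ, 0 < n ∧ ∃ s : Fin n → Omega1, IsDerivedBase R s ∧
          DerivedClubEmbeds R s (codedRel x))) :
    SAS = RegSet ∩ AronSet ∩ (EmbedS R)ᶜ := by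
  ext x
  constructor
  · rintro ⟨hreg, hsp⟩
    have haron := hsp.1
    refine ⟨⟨hreg, haron.2⟩, ?_⟩
    exact (hRiff x hreg haron).1 hsp
  · rintro ⟨⟨hreg, hch⟩, hnemb⟩
    have haron : IsAronszajnTree (codedRel x) := ⟨hreg.toIsAleph1Tree, hch⟩
    exact ⟨hreg, (hRiff x hreg haron).2 hnemb⟩

lemma sus_eq_pi : SusS = RegSet ∩ AronSet ∩ AntiSet := by
  ext x
  constructor
  · rintro ⟨hreg, hsus⟩
    exact ⟨⟨hreg, hsus.1.2⟩, hsus.2⟩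
  · rintro ⟨⟨hreg, hch⟩, hat⟩
    exact ⟨hreg, ⟨⟨hreg.toIsAleph1Tree, hch⟩, hat⟩⟩

lemma sus_eq_sig {F : Omega1 → Omega1 → Omega1 → Prop} (hFsus : ∀ i, IsSuslinTree (F i))
    (hFall : ∀ r : Omega1 → Omega1 → Prop, IsSuslinTree r → ∃ i, ClubIso (F i) r) :
    SusS = RegSet ∩ ⋃ i : Omega1, {x : XX | ∃ g : G, (x, g) ∈ DCert ∩ DCI (F i)} := by
  ext x
  constructor
  · rintro ⟨hreg, hsus⟩
    rcases hFall (codedRel x) hsus with ⟨i, hci⟩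
    rcases (dci_iff (F i) x hreg).1 hci with ⟨g, hg⟩
    exact ⟨hreg, mem_iUnion.2 ⟨i, g, hg⟩⟩
  · rintro ⟨hreg, hmem⟩
    rcases mem_iUnion.1 hmem with ⟨i, g, hg⟩
    have hci := (dci_iff (F i) x hreg).2 ⟨g, hg⟩
    exact ⟨hreg, suslin_transfer (hFsus i) hreg hci⟩

lemma delta_SAS {R : Omega1 → Omega1 → Prop} (hRiff : ∀ x : XX,
    IsRegularTreeCode x → IsAronszajnTree (codedRel x) →
      (IsSpecialAronszajnTree (codedRel x) ↔
        ¬ ∃ n : ℕ, 0 < n ∧ ∃ s : Fin n → Omega1, IsDerivedBase R s ∧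
          DerivedClubEmbeds R s (codedRel x))) :
    IsDelta11 tX SAS := by
  constructor
  · rw [sas_eq_pi hRiff]
    exact pi_inter (pi_inter pi_RegSet pi_AronSet) (pi_EmbedS_compl R)
  · show IsPi11 tX SASᶜ
    rw [sas_eq_sig, compl_inter]
    exact pi_union pi_RegSet_compl pi_DecompS_compl

lemma delta_SusS {F : Omega1 → Omega1 → Omega1 → Prop} (hFsus : ∀ i, IsSuslinTree (F i))
    (hFall : ∀ r : Omega1 → Omega1 → Prop, IsSuslinTree r → ∃ i, ClubIso (F i) r) :
    IsDelta11 tX SusS := by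
  constructor
  · rw [sus_eq_pi]
    exact pi_inter (pi_inter pi_RegSet pi_AronSet) pi_AntiSet
  · show IsPi11 tX SusSᶜ
    rw [sus_eq_sig hFsus hFall, compl_inter]
    refine pi_union pi_RegSet_compl ?_
    rw [compl_iUnion]
    refine pi_iInter (fun i => ?_)
    have heq : {x : XX | ∃ g : G, (x, g) ∈ DCert ∩ DCI (F i)}ᶜ =
        {x : XX | ∀ g : G, (x, g) ∈ (DCert ∩ DCI (F i))ᶜ} := by
      ext x
      simp [not_exists]
    rw [heq]
    exact pi_forall (delta_inter delta_DCert (delta_DCI (F i))).2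

end Assembly


end St13
/-- In the Abraham–Shelah model (CH together with hypotheses (a) and (b)), the
classes of regular special Aronszajn trees and of regular Suslin trees are both
`Δ¹₁` subsets of `2^{ω₁}`. -/
theorem statement_13
    (hCH : (2 : Cardinal) ^ Cardinal.aleph0 = Cardinal.aleph 1)
    (ha : ∃ R : Omega1 → Omega1 → Prop, IsSuslinTree R ∧
      ∀ x : Omega1 → Bool, IsRegularTreeCode x → IsAronszajnTree (codedRel x) →
        (IsSpecialAronszajnTree (codedRel x) ↔
          ¬ ∃ n : ℕ, 0 < n ∧ ∃ s : Fin n → Omega1, IsDerivedBase R s ∧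
            DerivedClubEmbeds R s (codedRel x)))
    (hb : ∃ F : Omega1 → Omega1 → Omega1 → Prop, (∀ i, IsSuslinTree (F i)) ∧
      ∀ r : Omega1 → Omega1 → Prop, IsSuslinTree r → ∃ i, ClubIso (F i) r) :
    IsDelta11 (gbsTop Omega1 Bool)
      {x : Omega1 → Bool | IsRegularTreeCode x ∧ IsSpecialAronszajnTree (codedRel x)} ∧
    IsDelta11 (gbsTop Omega1 Bool)
      {x : Omega1 → Bool | IsRegularTreeCode x ∧ IsSuslinTree (codedRel x)} := by
  obtain ⟨R, -, hRiff⟩ := ha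
  obtain ⟨F, hFsus, hFall⟩ := hb
  exact ⟨St13.delta_SAS hRiff, St13.delta_SusS hFsus hFall⟩

end
end

section
/- Suppose T ⊆ ω^{<ω₁} is a countable downward closed tree of limit height β and Φ is a countable family of specializing pairs on T. Fix s ∈ T, (φ*, δ*) ∈ Φ, and Δ > 0. Then there is a cofinal, downward closed branch b ⊆ T containing s such that sup{|φ*(s) − φ*(t)| : s ≤ t ∈ b} < Δ, and for every t' ∈ b and every (φ, δ) ∈ Φ, sup{|φ(t') − φ(t)| : t' ≤ t ∈ b} < δ(t'). -/
noncomputable section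

open Set

/-- `s` is an element of `ω^{<ω₁}`, coded as a partial function `ω₁ → ℕ` whose
domain is a proper initial segment of `ω₁`. -/
def IsNSeq (s : Omega1 → Option ℕ) : Prop :=
  ∃ β : Omega1, ∀ a, s a ≠ none ↔ a < β

/-- `s ∈ ω^{<ω₁}` has length (domain) `β`. -/
def nseqLen (s : Omega1 → Option ℕ) (β : Omega1) : Prop :=
  ∀ a, s a ≠ none ↔ a < β

/-- The restriction of `s` to the coordinates below `γ`. -/
def nseqRestrict (s : Omega1 → Option ℕ) (γ : Omega1) : Omega1 → Option ℕ :=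
  fun a => if a < γ then s a else none

/-- The end-extension (partial) order on `ω^{<ω₁}`. -/
def nseqLE (s t : Omega1 → Option ℕ) : Prop :=
  ∀ a y, s a = some y → t a = some y

/-- Strict end-extension on `ω^{<ω₁}`. -/
def nseqLT (s t : Omega1 → Option ℕ) : Prop := nseqLE s t ∧ s ≠ t

/-- `T` is a downward closed subtree of `ω^{<ω₁}`. -/
def IsNatSubtree (T : Set (Omega1 → Option ℕ)) : Prop :=
  (∀ s ∈ T, IsNSeq s) ∧ ∀ s ∈ T, ∀ γ : Omega1, nseqRestrict s γ ∈ T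

/-- The subtree `T ⊆ ω^{<ω₁}` has height `β`: every node has length `< β` and
there are nodes of every length `< β`. -/
def NatSubtreeHeight (T : Set (Omega1 → Option ℕ)) (β : Omega1) : Prop :=
  (∀ s ∈ T, ∃ γ, γ < β ∧ nseqLen s γ) ∧ ∀ γ, γ < β → ∃ s ∈ T, nseqLen s γ

/-- `β` is a limit element of `ω₁`. -/
def IsLimitElem (β : Omega1) : Prop :=
  (∃ a, a < β) ∧ ∀ a, a < β → ∃ c, a < c ∧ c < β

/-- `(φ, δ)` is a specializing pair on the subtree `T ⊆ ω^{<ω₁}`: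
`φ : T → ℚ` is strictly order preserving, `s < t` implies `|φ s - φ t| < δ s`, and
whenever `γ₁ < γ₂` are below the height of `T`, `s ∈ T` has length `γ₁` and `Δ > 0`,
there is `t ∈ T` of length `γ₂` above `s` with `|φ s - φ t| < Δ` and `δ t < Δ`. -/
structure IsSpecPair (T : Set (Omega1 → Option ℕ))
    (φ : (Omega1 → Option ℕ) → ℚ) (δ : (Omega1 → Option ℕ) → ℚ) : Prop where
  pos : ∀ s ∈ T, 0 < δ s
  mono : ∀ s ∈ T, ∀ t ∈ T, nseqLT s t → φ s < φ t
  close : ∀ s ∈ T, ∀ t ∈ T, nseqLT s t → |φ s - φ t| < δ s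
  ext : ∀ γ₁ γ₂ : Omega1, γ₁ < γ₂ → (∃ u ∈ T, nseqLen u γ₂) →
    ∀ s ∈ T, nseqLen s γ₁ → ∀ Δ : ℚ, 0 < Δ →
      ∃ t ∈ T, nseqLen t γ₂ ∧ nseqLT s t ∧ |φ s - φ t| < Δ ∧ δ t < Δ


lemma nseqLE_trans' {u v w : Omega1 → Option ℕ} (h1 : nseqLE u v) (h2 : nseqLE v w) :
    nseqLE u w := fun a y h => h2 a y (h1 a y h)

lemma nseqLen_unique {u : Omega1 → Option ℕ} {γ γ' : Omega1}
    (h1 : nseqLen u γ) (h2 : nseqLen u γ') : γ = γ' := by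
  by_contra hne
  rcases lt_or_gt_of_ne hne with h | h
  · exact absurd ((h1 γ).mp ((h2 γ).mpr h)) (lt_irrefl γ)
  · exact absurd ((h2 γ').mp ((h1 γ').mpr h)) (lt_irrefl γ')

lemma nseq_comp_aux {u v w : Omega1 → Option ℕ} {γu γv : Omega1}
    (hu : nseqLen u γu) (hv : nseqLen v γv) (hguv : γu ≤ γv)
    (h1 : nseqLE u w) (h2 : nseqLE v w) : nseqLE u v := by
  intro a y ha
  have haγ : a < γv := lt_of_lt_of_le ((hu a).mp (by simp [ha])) hguv
  cases h' : v a with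
  | none => exact absurd ((hv a).mpr haγ) (by simp [h'])
  | some y' =>
    have e1 : w a = some y := h1 a y ha
    have e2 : w a = some y' := h2 a y' h'
    have hyy : y = y' := Option.some_injective ℕ (e1.symm.trans e2)
    rw [hyy]

lemma nseq_comparable {u v w : Omega1 → Option ℕ}
    (hu : IsNSeq u) (hv : IsNSeq v) (h1 : nseqLE u w) (h2 : nseqLE v w) :
    nseqLE u v ∨ nseqLE v u := by
  obtain ⟨γu, hγu⟩ := hu
  obtain ⟨γv, hγv⟩ := hv
  rcases le_total γu γv with h | h
  · exact Or.inl (nseq_comp_aux hγu hγv h h1 h2)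
  · exact Or.inr (nseq_comp_aux hγv hγu h h2 h1)

lemma nseqRestrict_le (u : Omega1 → Option ℕ) (γ : Omega1) :
    nseqLE (nseqRestrict u γ) u := by
  intro a y h
  unfold nseqRestrict at h
  split_ifs at h with hc
  exact h

lemma nseqRestrict_len {u : Omega1 → Option ℕ} {γ γ' : Omega1} (h : nseqLen u γ')
    (hle : γ ≤ γ') : nseqLen (nseqRestrict u γ) γ := by
  intro a
  unfold nseqRestrict
  split_ifs with hc
  · exact ⟨fun _ => hc, fun _ => (h a).mpr (lt_of_lt_of_le hc hle)⟩
  · simp [hc]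

/-- Given a countable downward closed subtree `T ⊆ ω^{<ω₁}` of limit height `β`, a
countable family `Φ` of specializing pairs on `T`, a node `s ∈ T`, a pair
`(φ*, δ*) ∈ Φ` and `Δ > 0`, there is a cofinal downward closed branch `b ⊆ T`
containing `s` with `sup {|φ* s - φ* t| : s ≤ t ∈ b} < Δ`, and such that for every
`t' ∈ b` and `(φ, δ) ∈ Φ`, `sup {|φ t' - φ t| : t' ≤ t ∈ b} < δ t'`. -/
theorem statement_17 (T : Set (Omega1 → Option ℕ)) (β : Omega1)
    (hT : IsNatSubtree T) (hctbl : T.Countable)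
    (hlim : IsLimitElem β) (hht : NatSubtreeHeight T β)
    (Φ : Set (((Omega1 → Option ℕ) → ℚ) × ((Omega1 → Option ℕ) → ℚ)))
    (hΦctbl : Φ.Countable) (hΦ : ∀ p ∈ Φ, IsSpecPair T p.1 p.2)
    (s : Omega1 → Option ℕ) (hs : s ∈ T)
    (φs δs : (Omega1 → Option ℕ) → ℚ) (hp : (φs, δs) ∈ Φ)
    (Δ : ℚ) (hΔ : 0 < Δ) :
    ∃ b : Set (Omega1 → Option ℕ), b ⊆ T ∧ s ∈ b ∧
      (∀ t ∈ b, ∀ u ∈ b, t = u ∨ nseqLT t u ∨ nseqLT u t) ∧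
      (∀ t ∈ b, ∀ u ∈ T, nseqLE u t → u ∈ b) ∧
      (∀ γ, γ < β → ∃ t ∈ b, nseqLen t γ) ∧
      (∃ q : ℚ, q < Δ ∧ ∀ t ∈ b, nseqLE s t → |φs s - φs t| ≤ q) ∧
      (∀ t' ∈ b, ∀ p ∈ Φ, ∃ q : ℚ, q < p.2 t' ∧
        ∀ t ∈ b, nseqLE t' t → |p.1 t' - p.1 t| ≤ q) := by
  classical
  haveI : Nonempty Omega1 := ⟨β⟩
  obtain ⟨eT, hTeq⟩ := hctbl.exists_eq_range ⟨s, hs⟩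
  obtain ⟨eΦ, hΦeq⟩ := hΦctbl.exists_eq_range ⟨(φs, δs), hp⟩
  have memT : ∀ n, eT n ∈ T := fun n => by rw [hTeq]; exact Set.mem_range_self n
  have memΦ : ∀ k, eΦ k ∈ Φ := fun k => by rw [hΦeq]; exact Set.mem_range_self k
  have specΦ : ∀ k, IsSpecPair T (eΦ k).1 (eΦ k).2 := fun k => hΦ _ (memΦ k)
  have hlamE : ∀ n, ∃ γ, nseqLen (eT n) γ := fun n => hT.1 _ (memT n)
  choose lam hlam using hlamE
  have lenlt : ∀ u ∈ T, ∀ γ, nseqLen u γ → γ < β := by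
    intro u hu γ hγ
    obtain ⟨γ', hγ'β, hγ'⟩ := hht.1 u hu
    rwa [nseqLen_unique hγ hγ']
  have lamlt : ∀ n, lam n < β := fun n => lenlt _ (memT n) _ (hlam n)
  have monoLE : ∀ p ∈ Φ, ∀ u ∈ T, ∀ v ∈ T, nseqLE u v → p.1 u ≤ p.1 v := by
    intro p hp' u hu v hv hle
    by_cases h : u = v
    · rw [h]
    · exact le_of_lt ((hΦ p hp').mono u hu v hv ⟨hle, h⟩)
  have key : ∀ n : ℕ, ∀ u : {x // x ∈ T}, ∃ v : {x // x ∈ T},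
      nseqLT u.1 v.1 ∧ (∃ γ : Omega1, nseqLen v.1 γ ∧ lam n < γ) ∧
      (n = 0 → |φs u.1 - φs v.1| < Δ / 2 ∧ δs v.1 < Δ / 2) ∧
      (∀ i k : ℕ, n ≠ 0 → Nat.unpair (Nat.unpair n).2 = (i, k) → nseqLE (eT i) u.1 →
        |(eΦ k).1 u.1 - (eΦ k).1 v.1| <
            ((eΦ k).1 (eT i) + (eΦ k).2 (eT i) - (eΦ k).1 u.1) / 2 ∧
          (eΦ k).2 v.1 < ((eΦ k).1 (eT i) + (eΦ k).2 (eT i) - (eΦ k).1 u.1) / 2) := by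
    intro n u
    obtain ⟨γ₁, hγ₁⟩ := hT.1 u.1 u.2
    have hγ₁β : γ₁ < β := lenlt _ u.2 _ hγ₁
    obtain ⟨c, hc1, hc2⟩ := hlim.2 (max γ₁ (lam n)) (max_lt hγ₁β (lamlt n))
    have hwit : ∃ w ∈ T, nseqLen w c := hht.2 c hc2
    have hγ₁c : γ₁ < c := lt_of_le_of_lt (le_max_left _ _) hc1
    have hlamc : lam n < c := lt_of_le_of_lt (le_max_right _ _) hc1
    rcases eq_or_ne n 0 with hn0 | hn0
    · obtain ⟨v, hvT, hvlen, hvlt, habs, hδ⟩ :=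
        (hΦ (φs, δs) hp).ext γ₁ c hγ₁c hwit u.1 u.2 hγ₁ (Δ / 2) (by linarith)
      exact ⟨⟨v, hvT⟩, hvlt, ⟨c, hvlen, hlamc⟩, fun _ => ⟨habs, hδ⟩,
        fun i k hn _ _ => absurd hn0 hn⟩
    · set i := (Nat.unpair (Nat.unpair n).2).1 with hi
      set k := (Nat.unpair (Nat.unpair n).2).2 with hk
      by_cases hle : nseqLE (eT i) u.1
      · have hg : 0 < ((eΦ k).1 (eT i) + (eΦ k).2 (eT i) - (eΦ k).1 u.1) / 2 := by
          rcases eq_or_ne (eT i) u.1 with he | he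
          · rw [he]
            have := (specΦ k).pos u.1 u.2
            linarith
          · have hcl := (specΦ k).close (eT i) (memT i) u.1 u.2 ⟨hle, he⟩
            have h2 := abs_lt.mp hcl
            linarith [h2.1]
        obtain ⟨v, hvT, hvlen, hvlt, habs, hδ⟩ :=
          (specΦ k).ext γ₁ c hγ₁c hwit u.1 u.2 hγ₁ _ hg
        refine ⟨⟨v, hvT⟩, hvlt, ⟨c, hvlen, hlamc⟩, fun h0 => absurd h0 hn0, ?_⟩
        intro i' k' _ heq hle'
        have hik : i' = i := by rw [hi, heq]
        have hkk : k' = k := by rw [hk, heq]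
        rw [hik, hkk]
        exact ⟨habs, hδ⟩
      · obtain ⟨v, hvT, hvlen, hvlt, _, _⟩ :=
          (specΦ k).ext γ₁ c hγ₁c hwit u.1 u.2 hγ₁ 1 one_pos
        refine ⟨⟨v, hvT⟩, hvlt, ⟨c, hvlen, hlamc⟩, fun h0 => absurd h0 hn0, ?_⟩
        intro i' k' _ heq hle'
        have hik : i' = i := by rw [hi, heq]
        exact absurd (hik ▸ hle') hle
  choose F hF using key
  let t : ℕ → {x // x ∈ T} := fun n => Nat.rec ⟨s, hs⟩ (fun m u => F m u) n
  have hLT : ∀ n, nseqLT (t n).1 (t (n + 1)).1 := fun n => (hF n (t n)).1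
  have hlen1 : ∀ n, ∃ γ, nseqLen (t (n + 1)).1 γ ∧ lam n < γ := fun n => (hF n (t n)).2.1
  have hctl0 : |φs s - φs (t 1).1| < Δ / 2 ∧ δs (t 1).1 < Δ / 2 := (hF 0 (t 0)).2.2.1 rfl
  have hctl : ∀ n, ∀ i k : ℕ, n ≠ 0 → Nat.unpair (Nat.unpair n).2 = (i, k) →
      nseqLE (eT i) (t n).1 →
      |(eΦ k).1 (t n).1 - (eΦ k).1 (t (n + 1)).1| <
          ((eΦ k).1 (eT i) + (eΦ k).2 (eT i) - (eΦ k).1 (t n).1) / 2 ∧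
        (eΦ k).2 (t (n + 1)).1 <
          ((eΦ k).1 (eT i) + (eΦ k).2 (eT i) - (eΦ k).1 (t n).1) / 2 :=
    fun n => (hF n (t n)).2.2.2
  have tLE : ∀ m n, m ≤ n → nseqLE (t m).1 (t n).1 := by
    intro m n hmn
    induction n, hmn using Nat.le_induction with
    | base => exact fun a y h => h
    | succ n hmn ih => exact nseqLE_trans' ih (hLT n).1
  set b : Set (Omega1 → Option ℕ) := {u | u ∈ T ∧ ∃ n, nseqLE u (t n).1} with hb
  have compb : ∀ u ∈ b, ∀ v ∈ b, nseqLE u v ∨ nseqLE v u := by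
    rintro u ⟨huT, m, hm⟩ v ⟨hvT, n, hn⟩
    have h1 : nseqLE u (t (max m n)).1 := nseqLE_trans' hm (tLE m _ (le_max_left m n))
    have h2 : nseqLE v (t (max m n)).1 := nseqLE_trans' hn (tLE n _ (le_max_right m n))
    exact nseq_comparable (hT.1 u huT) (hT.1 v hvT) h1 h2
  have tmemb : ∀ n, (t n).1 ∈ b := fun n => ⟨(t n).2, n, fun a y h => h⟩
  have bnd : ∀ n, ∀ p ∈ Φ, ∀ w ∈ b, p.1 w ≤ p.1 (t n).1 + p.2 (t n).1 := by
    intro n p hp' w hw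
    have hwT : w ∈ T := hw.1
    have hδpos := (hΦ p hp').pos (t n).1 (t n).2
    rcases compb w hw (t n).1 (tmemb n) with h | h
    · have := monoLE p hp' w hwT (t n).1 (t n).2 h
      linarith
    · by_cases he : (t n).1 = w
      · rw [he]; linarith [he ▸ hδpos]
      · have hcl := (hΦ p hp').close (t n).1 (t n).2 w hwT ⟨h, he⟩
        have h2 := abs_lt.mp hcl
        linarith [h2.1]
  refine ⟨b, fun u hu => hu.1, ⟨hs, 0, fun a y h => h⟩, ?_, ?_, ?_, ?_, ?_⟩
  · intro x hx y hy
    rcases compb x hx y hy with h | h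
    · by_cases he : x = y
      · exact Or.inl he
      · exact Or.inr (Or.inl ⟨h, he⟩)
    · by_cases he : x = y
      · exact Or.inl he
      · exact Or.inr (Or.inr ⟨h, fun hyx => he hyx.symm⟩)
  · rintro x ⟨hxT, n, hn⟩ u huT hle
    exact ⟨huT, n, nseqLE_trans' hle hn⟩
  · intro γ hγ
    obtain ⟨c, hc1, hc2⟩ := hlim.2 γ hγ
    obtain ⟨w, hwT, hwlen⟩ := hht.2 c hc2
    have hwr : w ∈ Set.range eT := by rw [← hTeq]; exact hwT
    obtain ⟨m, hm⟩ := hwr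
    rw [← hm] at hwlen
    have hlc : lam m = c := nseqLen_unique (hlam m) hwlen
    obtain ⟨γ', hγ'len, hγ'gt⟩ := hlen1 m
    have hγγ' : γ ≤ γ' := le_of_lt (lt_trans (hlc ▸ hc1) hγ'gt)
    exact ⟨nseqRestrict (t (m + 1)).1 γ,
      ⟨hT.2 _ (t (m + 1)).2 γ, m + 1, nseqRestrict_le _ _⟩,
      nseqRestrict_len hγ'len hγγ'⟩
  · refine ⟨φs (t 1).1 + δs (t 1).1 - φs s, ?_, ?_⟩
    · have h1 := abs_lt.mp hctl0.1
      linarith [hctl0.2, h1.1, h1.2]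
    · intro x hx hsx
      have hb1 := bnd 1 (φs, δs) hp x hx
      have hφ : φs s ≤ φs x := monoLE (φs, δs) hp s hs x hx.1 hsx
      rw [abs_sub_comm, abs_of_nonneg (by linarith)]
      linarith
  · rintro t' ⟨ht'T, m, hm⟩ p hp'
    have ht'r : t' ∈ Set.range eT := by rw [← hTeq]; exact ht'T
    obtain ⟨i, hi⟩ := ht'r
    have hpr : p ∈ Set.range eΦ := by rw [← hΦeq]; exact hp'
    obtain ⟨k, hk⟩ := hpr
    have hn0 : Nat.pair (m + 1) (Nat.pair i k) ≠ 0 := by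
      have := Nat.left_le_pair (m + 1) (Nat.pair i k)
      omega
    have hmn : m ≤ Nat.pair (m + 1) (Nat.pair i k) :=
      le_trans (Nat.le_succ m) (Nat.left_le_pair _ _)
    have hcode : Nat.unpair (Nat.unpair (Nat.pair (m + 1) (Nat.pair i k))).2 = (i, k) := by
      rw [Nat.unpair_pair]
      exact Nat.unpair_pair i k
    have hle : nseqLE (eT i) (t (Nat.pair (m + 1) (Nat.pair i k))).1 := by
      rw [hi]
      exact nseqLE_trans' hm (tLE m _ hmn)
    obtain ⟨h1, h2⟩ := hctl (Nat.pair (m + 1) (Nat.pair i k)) i k hn0 hcode hle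
    rw [hi, hk] at h1 h2
    refine ⟨p.1 (t (Nat.pair (m + 1) (Nat.pair i k) + 1)).1 +
        p.2 (t (Nat.pair (m + 1) (Nat.pair i k) + 1)).1 - p.1 t', ?_, ?_⟩
    · have h3 := abs_lt.mp h1
      linarith [h3.1, h3.2]
    · intro x hx hx'
      have hb1 := bnd (Nat.pair (m + 1) (Nat.pair i k) + 1) p hp' x hx
      have hφ : p.1 t' ≤ p.1 x := monoLE p hp' t' ht'T x hx.1 hx'
      rw [abs_sub_comm, abs_of_nonneg (by linarith)]
      linarith


end
end
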